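/- arXiv:2408.12699 — 6 statements merged into one kernel-verified Lean document; each statement's English description precedes it below -/
import Mathlib

section
/- Let V be a finite type and let Δ be a finite multidigraph on V given by a nonempty multiset E of directed edges. Suppose Δ is connected, i.e. every two distinct vertices of V are joined by a walk in which each edge of E may be traversed in either direction. Then Δ is circuit-Eulerian if and only if both (i) Δ is strongly connected, and (ii) τ(x) = η(x) for every vertex x ∈ V. -/
/-- A directed walk from `x` to `y` in the multidigraph with edge multiset `E`:
a nonempty list of edges, each an element of `E`, consecutively linked
(head of each edge equals tail of the next), starting at `x` and ending at `y`. -/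
def IsDiwalk {V : Type*} (E : Multiset (V × V)) (x y : V) (L : List (V × V)) : Prop :=
  L ≠ [] ∧ (∀ e ∈ L, e ∈ E) ∧ L.Chain' (fun e f => e.2 = f.1) ∧
    L.head?.map Prod.fst = some x ∧ L.getLast?.map Prod.snd = some y

/-- An Eulerian dicircuit: a directed trail from some vertex back to itself whose
multiset of entries equals the full edge multiset. -/
def CircuitEulerian {V : Type*} (E : Multiset (V × V)) : Prop :=
  ∃ (v : V) (L : List (V × V)), IsDiwalk E v v L ∧ (L : Multiset (V × V)) = E

/-- An Eulerian dipath: a directed trail between two distinct vertices whose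
multiset of entries equals the full edge multiset. -/
def PathEulerian {V : Type*} (E : Multiset (V × V)) : Prop :=
  ∃ (x y : V), x ≠ y ∧ ∃ L : List (V × V), IsDiwalk E x y L ∧ (L : Multiset (V × V)) = E

/-- Strong connectedness: between every two distinct vertices there are directed
walks both ways. -/
def StronglyConnected {V : Type*} (E : Multiset (V × V)) : Prop :=
  ∀ x y : V, x ≠ y → (∃ L, IsDiwalk E x y L) ∧ (∃ L, IsDiwalk E y x L)

/-- Connectedness: every two distinct vertices are joined by a walk in which each
edge of `E` may be traversed in either direction. -/
def UndirConnected {V : Type*} (E : Multiset (V × V)) : Prop :=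
  ∀ x y : V, x ≠ y → Relation.ReflTransGen (fun a b => (a, b) ∈ E ∨ (b, a) ∈ E) x y

/-- Out-degree: the number of edges (with multiplicity) whose tailpoint is `x`. -/
def outDeg {V : Type*} [DecidableEq V] (E : Multiset (V × V)) (x : V) : ℕ :=
  Multiset.countP (fun e => e.1 = x) E

/-- In-degree: the number of edges (with multiplicity) whose headpoint is `x`. -/
def inDeg {V : Type*} [DecidableEq V] (E : Multiset (V × V)) (x : V) : ℕ :=
  Multiset.countP (fun e => e.2 = x) E

section Helpers

variable {V : Type*}

lemma count_walk [DecidableEq V] (a : V) :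
    ∀ (L : List (V × V)) (x y : V), L.Chain' (fun e f => e.2 = f.1) →
    L.head?.map Prod.fst = some x → L.getLast?.map Prod.snd = some y →
    Multiset.countP (fun e : V × V => e.1 = a) (L : Multiset (V × V)) + (if y = a then 1 else 0)
      = Multiset.countP (fun e : V × V => e.2 = a) (L : Multiset (V × V)) + (if x = a then 1 else 0) := by
  intro L
  induction L with
  | nil => intro x y _ hx _; simp at hx
  | cons e t IH =>
    intro x y hc hx hy
    simp only [List.head?_cons, Option.map_some, Option.some.injEq] at hx
    cases t with
    | nil =>
      simp only [List.getLast?_singleton, Option.map_some, Option.some.injEq] at hy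
      subst hx; subst hy
      have h1 : (↑[e] : Multiset (V × V)) = e ::ₘ 0 := by simp
      rw [h1, Multiset.countP_cons, Multiset.countP_cons]
      simp only [Multiset.countP_zero]
      split_ifs <;> simp_all
    | cons f t' =>
      have hy' : (f :: t').getLast?.map Prod.snd = some y := by
        simpa using hy
      have hIH := IH f.1 y (List.isChain_cons_cons.mp hc).2 (by simp) hy'
      have hef : e.2 = f.1 := (List.isChain_cons_cons.mp hc).1
      have : (↑(e :: f :: t') : Multiset (V × V)) = e ::ₘ ↑(f :: t') := by simp
      rw [this, Multiset.countP_cons, Multiset.countP_cons]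
      subst hx
      rw [← hef] at hIH
      split_ifs at hIH ⊢ <;> omega

lemma count_closed [DecidableEq V] (a v : V) {L : List (V × V)}
    (hc : L.Chain' (fun e f => e.2 = f.1))
    (hx : L.head?.map Prod.fst = some v) (hy : L.getLast?.map Prod.snd = some v) :
    Multiset.countP (fun e : V × V => e.1 = a) (L : Multiset (V × V))
      = Multiset.countP (fun e : V × V => e.2 = a) (L : Multiset (V × V)) := by
  have := count_walk a L v v hc hx hy
  omega

lemma diwalk_append {E : Multiset (V × V)} {x y z : V} {L1 L2 : List (V × V)}
    (h1 : IsDiwalk E x y L1) (h2 : IsDiwalk E y z L2) : IsDiwalk E x z (L1 ++ L2) := by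
  obtain ⟨hn1, hm1, hc1, hh1, hl1⟩ := h1
  obtain ⟨hn2, hm2, hc2, hh2, hl2⟩ := h2
  refine ⟨by simp [hn1], ?_, ?_, ?_, ?_⟩
  · intro e he; rcases List.mem_append.mp he with h | h
    · exact hm1 e h
    · exact hm2 e h
  · rw [List.Chain', List.isChain_append]
    refine ⟨hc1, hc2, ?_⟩
    intro p hp q hq
    have hp' : p.2 = y := by
      rw [hp] at hl1; simpa using hl1
    have hq' : q.1 = y := by
      rw [hq] at hh2; simpa using hh2
    rw [hp', hq']
  · rcases List.exists_cons_of_ne_nil hn1 with ⟨e, t, rfl⟩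
    simpa using hh1
  · rw [List.getLast?_append]
    rcases List.exists_cons_of_ne_nil hn2 with ⟨e, t, rfl⟩
    have : (e :: t).getLast?.isSome := by
      rw [List.getLast?_isSome]; simp
    rcases Option.isSome_iff_exists.mp this with ⟨b, hb⟩
    rw [hb]; rw [hb] at hl2; simpa using hl2

end Helpers
section Helpers2
variable {V : Type*}

lemma rotate_diwalk {E : Multiset (V × V)} {v : V} {L1 L2 : List (V × V)} {e : V × V}
    (h : IsDiwalk E v v (L1 ++ e :: L2)) : IsDiwalk E e.1 e.1 ((e :: L2) ++ L1) := by
  obtain ⟨hn, hm, hc, hh, hl⟩ := h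
  rw [List.Chain', List.isChain_append] at hc
  obtain ⟨hc1, hc2, hj⟩ := hc
  have hl2 : (e :: L2).getLast?.map Prod.snd = some v := by
    rwa [List.getLast?_append_of_ne_nil _ (by simp)] at hl
  rcases List.eq_nil_or_concat' L1 with rfl | ⟨t, b, rfl⟩
  · have hev : e.1 = v := by simpa using hh
    exact ⟨by simp, fun f hf => hm f (by simpa using hf), by simpa [List.Chain'] using hc2, by simp,
      by simpa [hev] using hl2⟩
  · have hq : ∃ q t', t ++ [b] = q :: t' := List.exists_cons_of_ne_nil (by simp)
    obtain ⟨q, t', hqt⟩ := hq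
    have hqv : q.1 = v := by
      rw [List.head?_append_of_ne_nil _ (by simp), hqt] at hh
      simpa using hh
    have hbe : b.2 = e.1 := hj b (by simp) e (by simp)
    refine ⟨by simp, ?_, ?_, by simp, ?_⟩
    · intro f hf; apply hm; rw [List.mem_append] at hf ⊢; tauto
    · rw [List.Chain', List.isChain_append]
      refine ⟨hc2, hc1, ?_⟩
      intro p hp q' hq'
      have hpv : p.2 = v := by
        rcases Option.isSome_iff_exists.mp ((List.getLast?_isSome).mpr
          (by simp : (e :: L2) ≠ [])) with ⟨c, hcc⟩
        rw [hcc] at hl2 hp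
        simp at hp hl2; exact hp ▸ hl2
      have hq'v : q'.1 = v := by
        rw [hqt] at hq'; simp at hq'; exact hq' ▸ hqv
      rw [hpv, hq'v]
    · rw [List.getLast?_append_of_ne_nil _ (by simp : t ++ [b] ≠ [])]
      simp [hbe]

lemma prefix_diwalk {E : Multiset (V × V)} {x : V} {P S : List (V × V)} {f : V × V}
    (h : IsDiwalk E x x (P ++ f :: S)) : IsDiwalk E x f.2 (P ++ [f]) := by
  obtain ⟨hn, hm, hc, hh, hl⟩ := h
  have hpref : (P ++ [f]) ++ S = P ++ f :: S := by simp
  refine ⟨by simp, ?_, ?_, ?_, ?_⟩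
  · intro g hg; apply hm; rw [List.mem_append] at hg ⊢
    rcases hg with h | h
    · tauto
    · simp at h; subst h; simp
  · rw [← hpref, List.Chain', List.isChain_append] at hc
    exact hc.1
  · rw [← hpref, List.head?_append_of_ne_nil _ (by simp)] at hh
    exact hh
  · rw [List.getLast?_append_of_ne_nil _ (by simp)]
    simp

lemma mem_map_countP [DecidableEq V] (L : List (V × V)) (x : V) :
    (x ∈ L.map Prod.fst ↔ 0 < Multiset.countP (fun e : V × V => e.1 = x) (L : Multiset (V × V)))
    ∧ (x ∈ L.map Prod.snd ↔ 0 < Multiset.countP (fun e : V × V => e.2 = x) (L : Multiset (V × V))) := by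
  constructor <;>
  · rw [Multiset.countP_pos, List.mem_map]
    constructor
    · rintro ⟨e, he, rfl⟩; exact ⟨e, by simpa using he, rfl⟩
    · rintro ⟨e, he, hp⟩; exact ⟨e, by simpa using he, hp⟩

lemma closed_mem_iff [DecidableEq V] {E : Multiset (V × V)} {v : V} {L : List (V × V)}
    (h : IsDiwalk E v v L) (x : V) : x ∈ L.map Prod.fst ↔ x ∈ L.map Prod.snd := by
  rw [(mem_map_countP L x).1, (mem_map_countP L x).2,
    count_closed x v h.2.2.1 h.2.2.2.1 h.2.2.2.2]

lemma closed_walk_reach {E : Multiset (V × V)} {v : V} {L : List (V × V)}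
    (h : IsDiwalk E v v L) {x y : V} (hx : x ∈ L.map Prod.fst) (hy : y ∈ L.map Prod.snd) :
    ∃ W, IsDiwalk E x y W := by
  rw [List.mem_map] at hx
  obtain ⟨e, heL, hex⟩ := hx
  obtain ⟨L1, L2, rfl⟩ := List.append_of_mem heL
  have hrot := rotate_diwalk h
  subst hex
  have hy' : y ∈ ((e :: L2) ++ L1).map Prod.snd := by
    simp only [List.mem_map, List.mem_append, List.mem_cons] at hy ⊢
    obtain ⟨w, hw, rfl⟩ := hy
    exact ⟨w, by tauto, rfl⟩
  rw [List.mem_map] at hy'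
  obtain ⟨f, hfL, hfy⟩ := hy'
  obtain ⟨P, S, hPS⟩ := List.append_of_mem hfL
  rw [hPS] at hrot
  exact ⟨P ++ [f], hfy ▸ prefix_diwalk hrot⟩

end Helpers2
section Helpers3
variable {V : Type*}

lemma split_diwalk {E : Multiset (V × V)} {v u : V} {L1 L2 : List (V × V)} {e : V × V}
    (h : IsDiwalk E v u (L1 ++ e :: L2)) (hL1 : L1 ≠ []) :
    IsDiwalk E v e.1 L1 ∧ IsDiwalk E e.1 u (e :: L2) := by
  obtain ⟨hn, hm, hc, hh, hl⟩ := h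
  rw [List.Chain', List.isChain_append] at hc
  obtain ⟨hc1, hc2, hj⟩ := hc
  rcases Option.isSome_iff_exists.mp ((List.getLast?_isSome).mpr hL1) with ⟨b, hb⟩
  have hbe : b.2 = e.1 := hj b (by rw [hb]; rfl) e (by simp)
  constructor
  · refine ⟨hL1, fun f hf => hm f (by simp [hf]), hc1, ?_, ?_⟩
    · rwa [List.head?_append_of_ne_nil _ hL1] at hh
    · rw [hb]; simp [hbe]
  · refine ⟨by simp, fun f hf => hm f (by simp [hf]), hc2, by simp, ?_⟩
    · rwa [List.getLast?_append_of_ne_nil _ (by simp)] at hl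

lemma exists_extension [DecidableEq V] {E : Multiset (V × V)}
    (hb : ∀ x, outDeg E x = inDeg E x) {a b : V} {L : List (V × V)}
    (hT : IsDiwalk E a b L) (hle : (L : Multiset (V × V)) ≤ E) (hab : b ≠ a) :
    ∃ e ∈ E - (L : Multiset (V × V)), e.1 = b := by
  have hw := count_walk b L a b hT.2.2.1 hT.2.2.2.1 hT.2.2.2.2
  rw [if_pos rfl, if_neg (fun h => hab h.symm)] at hw
  have h1 : Multiset.countP (fun e : V × V => e.2 = b) (L : Multiset (V × V))
      ≤ inDeg E b := Multiset.countP_le_of_le _ hle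
  have h2 : Multiset.countP (fun e : V × V => e.1 = b) (E - (L : Multiset (V × V)))
      = outDeg E b - Multiset.countP (fun e : V × V => e.1 = b) (L : Multiset (V × V)) :=
    Multiset.countP_sub hle _
  have h3 := hb b
  rw [← Multiset.countP_pos, h2]
  unfold outDeg inDeg at *
  omega

lemma le_snoc [DecidableEq V] {E : Multiset (V × V)} {L : List (V × V)} {e : V × V}
    (hle : (L : Multiset (V × V)) ≤ E) (he : e ∈ E - (L : Multiset (V × V))) :
    ((L ++ [e] : List (V × V)) : Multiset (V × V)) ≤ E := by
  rw [Multiset.le_iff_count]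
  intro f
  have hc : ((L ++ [e] : List (V × V)) : Multiset (V × V)) = ↑L + {e} := by
    rw [← Multiset.coe_add]; rfl
  rw [hc, Multiset.count_add]
  by_cases hf : f = e
  · subst hf
    have := Multiset.count_pos.mpr he
    rw [Multiset.count_sub] at this
    rw [Multiset.count_singleton, if_pos rfl]
    omega
  · have := Multiset.count_le_of_le f hle
    rw [Multiset.count_singleton, if_neg hf]
    omega

lemma close_trail [DecidableEq V] {E : Multiset (V × V)}
    (hb : ∀ x, outDeg E x = inDeg E x) :
    ∀ (n : ℕ) {a b : V} {L : List (V × V)},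
      Multiset.card (E - (L : Multiset (V × V))) ≤ n →
      IsDiwalk E a b L → (L : Multiset (V × V)) ≤ E →
      ∃ M, IsDiwalk E a a (L ++ M) ∧ ((L ++ M : List (V × V)) : Multiset (V × V)) ≤ E := by
  intro n
  induction n with
  | zero =>
    intro a b L hcard hT hle
    by_cases hba : b = a
    · subst hba; exact ⟨[], by simpa using hT, by simpa using hle⟩
    · obtain ⟨e, he, -⟩ := exists_extension hb hT hle hba
      exfalso
      have : E - (L : Multiset (V × V)) = 0 := Multiset.card_eq_zero.mp (Nat.le_zero.mp hcard)
      rw [this] at he; exact absurd he (Multiset.notMem_zero e)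
  | succ n IH =>
    intro a b L hcard hT hle
    by_cases hba : b = a
    · subst hba; exact ⟨[], by simpa using hT, by simpa using hle⟩
    · obtain ⟨e, he, heb⟩ := exists_extension hb hT hle hba
      have heE : e ∈ E := Multiset.mem_of_le (Multiset.sub_le_self _ _) he
      have hwalk : IsDiwalk E a e.2 (L ++ [e]) :=
        diwalk_append hT ⟨by simp, by simpa using heE, List.isChain_singleton _, by simp [heb], by simp⟩
      have hle' := le_snoc hle he
      have hcard' : Multiset.card (E - ((L ++ [e] : List (V × V)) : Multiset (V × V))) ≤ n := by
        have hc : ((L ++ [e] : List (V × V)) : Multiset (V × V)) = ↑L + {e} := by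
          rw [← Multiset.coe_add]; rfl
        rw [hc, tsub_add_eq_tsub_tsub, Multiset.sub_singleton]
        rw [Multiset.card_erase_of_mem he]
        have hpos : 0 < Multiset.card (E - (L : Multiset (V × V))) :=
          Multiset.card_pos.mpr (fun h0 => by rw [h0] at he; exact Multiset.notMem_zero e he)
        rw [Nat.pred_eq_sub_one]
        omega
      obtain ⟨M, hM1, hM2⟩ := IH hcard' hwalk hle'
      exact ⟨[e] ++ M, by simpa using hM1, by simpa using hM2⟩

end Helpers3
section Main
variable {V : Type*}

lemma eulerian_of_balanced [DecidableEq V] {E : Multiset (V × V)}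
    (hne : E ≠ 0) (hconn : UndirConnected E)
    (hb : ∀ x, outDeg E x = inDeg E x) : CircuitEulerian E := by
  classical
  obtain ⟨e₀, he₀⟩ := Multiset.exists_mem_of_ne_zero hne
  have hsingle : IsDiwalk E e₀.1 e₀.2 [e₀] :=
    ⟨by simp, by simpa using he₀, List.isChain_singleton _, by simp, by simp⟩
  have hsle : (([e₀] : List (V × V)) : Multiset (V × V)) ≤ E := by
    simpa using Multiset.singleton_le.mpr he₀
  obtain ⟨M₀, hM₀, hM₀le⟩ := close_trail hb _ le_rfl hsingle hsle
  set a := e₀.1 with ha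
  set P : ℕ → Prop := fun m =>
    ∃ L : List (V × V), IsDiwalk E a a L ∧ (L : Multiset (V × V)) ≤ E ∧ L.length = m with hP
  have hlen : ∀ {L : List (V × V)}, (L : Multiset (V × V)) ≤ E →
      L.length ≤ Multiset.card E := by
    intro L h
    have := Multiset.card_le_card h
    simpa using this
  have hP0 : P (([e₀] ++ M₀).length) := ⟨_, hM₀, hM₀le, rfl⟩
  set n := Nat.findGreatest P (Multiset.card E) with hn
  have hPn : P n := Nat.findGreatest_spec (hlen hM₀le) hP0
  obtain ⟨L, hL, hLle, hLlen⟩ := hPn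
  refine ⟨a, L, hL, ?_⟩
  by_contra hEq
  set E' := E - (L : Multiset (V × V)) with hE'def
  have hE' : E' ≠ 0 := by
    intro h0
    exact hEq (le_antisymm hLle (tsub_eq_zero_iff_le.mp h0))
  have hE'le : E' ≤ E := Multiset.sub_le_self _ _
  have hb' : ∀ x, outDeg E' x = inDeg E' x := by
    intro x
    have hcc := count_closed x a hL.2.2.1 hL.2.2.2.1 hL.2.2.2.2
    have h1 := hb x
    unfold outDeg inDeg at h1 ⊢
    rw [hE'def, Multiset.countP_sub hLle _, Multiset.countP_sub hLle _, hcc, h1]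
  have hamem : a ∈ L.map Prod.fst := by
    obtain ⟨e, t, rfl⟩ := List.exists_cons_of_ne_nil hL.1
    have he : e.1 = a := by simpa using hL.2.2.2.1
    exact List.mem_map.mpr ⟨e, by simp, he⟩
  obtain ⟨f₀, hf₀⟩ := Multiset.exists_mem_of_ne_zero hE'
  have key : ∃ w, w ∈ L.map Prod.fst ∧ ∃ g ∈ E', g.1 = w ∨ g.2 = w := by
    have hmot : ∀ c, Relation.ReflTransGen (fun p q => (p, q) ∈ E ∨ (q, p) ∈ E) a c →
        c ∈ L.map Prod.fst ∨ ∃ w, w ∈ L.map Prod.fst ∧ ∃ g ∈ E', g.1 = w ∨ g.2 = w := by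
      intro c hrtg
      induction hrtg with
      | refl => exact Or.inl hamem
      | @tail b c hab hr ih =>
        rcases ih with hbt | hgoal
        · rcases hr with hbc | hcb
          · by_cases hmem : (b, c) ∈ (L : Multiset (V × V))
            · exact Or.inl ((closed_mem_iff hL c).mpr
                (List.mem_map.mpr ⟨(b, c), Multiset.mem_coe.mp hmem, rfl⟩))
            · refine Or.inr ⟨b, hbt, (b, c), ?_, Or.inl rfl⟩
              rw [hE'def, ← Multiset.count_pos, Multiset.count_sub,
                Multiset.count_eq_zero_of_notMem hmem]
              have := Multiset.count_pos.mpr hbc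
              omega
          · by_cases hmem : (c, b) ∈ (L : Multiset (V × V))
            · exact Or.inl (List.mem_map.mpr ⟨(c, b), Multiset.mem_coe.mp hmem, rfl⟩)
            · refine Or.inr ⟨b, hbt, (c, b), ?_, Or.inr rfl⟩
              rw [hE'def, ← Multiset.count_pos, Multiset.count_sub,
                Multiset.count_eq_zero_of_notMem hmem]
              have := Multiset.count_pos.mpr hcb
              omega
        · exact Or.inr hgoal
    by_cases hf : f₀.1 ∈ L.map Prod.fst
    · exact ⟨f₀.1, hf, f₀, hf₀, Or.inl rfl⟩
    · by_cases hac : a = f₀.1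
      · exact absurd (hac ▸ hamem) hf
      · rcases hmot f₀.1 (hconn a f₀.1 hac) with h | h
        · exact absurd h hf
        · exact h
  obtain ⟨w, hw, g, hgE', hg⟩ := key
  have hg' : ∃ g' ∈ E', g'.1 = w := by
    rcases hg with h | h
    · exact ⟨g, hgE', h⟩
    · have hpos : 0 < Multiset.countP (fun e : V × V => e.2 = w) E' :=
        Multiset.countP_pos.mpr ⟨g, hgE', h⟩
      have hbw := hb' w
      unfold outDeg inDeg at hbw
      rw [← Multiset.countP_pos, hbw]
      exact hpos
  obtain ⟨g', hg'E', hg'w⟩ := hg'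
  have hg'single : IsDiwalk E' w g'.2 [g'] :=
    ⟨by simp, by simpa using hg'E', List.isChain_singleton _, by simp [hg'w], by simp⟩
  obtain ⟨M, hDwalk, hDle⟩ := close_trail hb' _ le_rfl hg'single
    (by simpa using Multiset.singleton_le.mpr hg'E')
  set D := [g'] ++ M with hD
  have hDE : IsDiwalk E w w D :=
    ⟨hDwalk.1, fun e he => Multiset.mem_of_le hE'le (hDwalk.2.1 e he),
      hDwalk.2.2.1, hDwalk.2.2.2.1, hDwalk.2.2.2.2⟩
  rw [List.mem_map] at hw
  obtain ⟨e, heL, hew⟩ := hw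
  obtain ⟨L1, L2, rfl⟩ := List.append_of_mem heL
  have hDE' : IsDiwalk E e.1 e.1 D := by rw [hew]; exact hDE
  have hnew : IsDiwalk E a a (L1 ++ (D ++ (e :: L2))) := by
    by_cases h1 : L1 = []
    · subst h1
      have hwa : e.1 = a := by simpa using hL.2.2.2.1
      simp only [List.nil_append] at hL ⊢
      exact diwalk_append (hwa ▸ hDE') hL
    · obtain ⟨hw1, hw2⟩ := split_diwalk hL h1
      exact diwalk_append hw1 (diwalk_append hDE' hw2)
  have hcount : ((L1 ++ (D ++ e :: L2) : List (V × V)) : Multiset (V × V)) ≤ E := by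
    rw [Multiset.le_iff_count]
    intro f
    have hc1 : ((L1 ++ (D ++ e :: L2) : List (V × V)) : Multiset (V × V))
        = ↑L1 + (↑D + ↑(e :: L2)) := by rw [← Multiset.coe_add, ← Multiset.coe_add]
    have hc2 : ((L1 ++ e :: L2 : List (V × V)) : Multiset (V × V)) = ↑L1 + ↑(e :: L2) := by
      rw [← Multiset.coe_add]
    have hD1 : Multiset.count f (↑D : Multiset (V × V)) ≤ Multiset.count f E' :=
      Multiset.count_le_of_le f hDle
    have hL1 : Multiset.count f ((L1 ++ e :: L2 : List (V × V)) : Multiset (V × V))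
        ≤ Multiset.count f E := Multiset.count_le_of_le f hLle
    rw [hc2, Multiset.count_add] at hL1
    rw [hE'def, Multiset.count_sub, hc2, Multiset.count_add] at hD1
    rw [hc1, Multiset.count_add, Multiset.count_add]
    omega
  have hlen2 : (L1 ++ (D ++ e :: L2)).length ≤ n :=
    Nat.le_findGreatest (hlen hcount) ⟨_, hnew, hcount, rfl⟩
  have hlen3 : (L1 ++ (D ++ e :: L2)).length = (L1 ++ e :: L2).length + D.length := by
    simp [List.length_append]
    omega
  have hDlen : 0 < D.length := by simp [hD]
  rw [hlen3, hLlen] at hlen2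
  omega

end Main
/-- **Theorem 5 (Euler's theorem for multidigraphs).**
A finite, connected, nontrivial multidigraph is circuit-Eulerian if and only if
it is strongly connected and out-degree equals in-degree at every vertex. -/
theorem circuitEulerian_iff_stronglyConnected_and_balanced
    {V : Type*} [Fintype V] [DecidableEq V] (E : Multiset (V × V))
    (hne : E ≠ 0) (hconn : UndirConnected E) :
    CircuitEulerian E ↔
      StronglyConnected E ∧ ∀ x : V, outDeg E x = inDeg E x := by
  classical
  constructor
  · rintro ⟨v, L, hL, hE⟩
    have hbal : ∀ x, outDeg E x = inDeg E x := by
      intro x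
      unfold outDeg inDeg
      rw [← hE]
      exact count_closed x v hL.2.2.1 hL.2.2.2.1 hL.2.2.2.2
    refine ⟨?_, hbal⟩
    intro x y hxy
    have hmemf : ∀ z z' : V, z ≠ z' → z ∈ L.map Prod.fst := by
      intro z z' hzz
      rcases Relation.ReflTransGen.cases_head (hconn z z' hzz) with h | ⟨c, hc, -⟩
      · exact absurd h hzz
      · rcases hc with h | h
        · rw [← hE] at h
          exact List.mem_map.mpr ⟨(z, c), Multiset.mem_coe.mp h, rfl⟩
        · rw [← hE] at h
          exact (closed_mem_iff hL z).mpr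
            (List.mem_map.mpr ⟨(c, z), Multiset.mem_coe.mp h, rfl⟩)
    have hx : x ∈ L.map Prod.fst := hmemf x y hxy
    have hy : y ∈ L.map Prod.fst := hmemf y x hxy.symm
    exact ⟨closed_walk_reach hL hx ((closed_mem_iff hL y).mp hy),
      closed_walk_reach hL hy ((closed_mem_iff hL x).mp hx)⟩
  · rintro ⟨-, hbal⟩
    exact eulerian_of_balanced hne hconn hbal
end

section
/- Let V be a finite type and let E be a nonempty multiset of directed edges on V which is symmetric, i.e. for all vertices a, b the multiplicity of (a,b) in E equals the multiplicity of (b,a) in E (so E is the two-way multidigraph engendered by an undirected multigraph). If the resulting multidigraph is connected, then it is circuit-Eulerian. -/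
section Helpers
variable {V : Type*} [DecidableEq V]

lemma walk_balance {L : List (V × V)} :
    ∀ {x y : V}, L.Chain' (fun e f => e.2 = f.1) →
      L.head?.map Prod.fst = some x → L.getLast?.map Prod.snd = some y →
      ∀ v, Multiset.countP (fun e => e.1 = v) (↑L : Multiset (V × V)) + (if v = y then 1 else 0)
        = Multiset.countP (fun e => e.2 = v) (↑L : Multiset (V × V)) + (if v = x then 1 else 0) := by
  induction L with
  | nil => intro x y _ h; simp at h
  | cons a t ih =>
    intro x y hchain hhead hlast v
    simp only [List.head?_cons, Option.map_some, Option.some.injEq] at hhead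
    rw [← Multiset.cons_coe, Multiset.countP_cons, Multiset.countP_cons]
    cases t with
    | nil =>
      simp only [List.getLast?_singleton, Option.map_some, Option.some.injEq] at hlast
      simp only [Multiset.coe_nil, Multiset.countP_zero]
      subst hhead hlast
      have e1 : (a.1 = v) ↔ (v = a.1) := eq_comm
      have e2 : (a.2 = v) ↔ (v = a.2) := eq_comm
      simp only [e1, e2]
      split_ifs <;> omega
    | cons b t' =>
      have hlast' : ((b :: t').getLast?).map Prod.snd = some y := by
        rwa [List.getLast?_cons_cons] at hlast
      have hch : a.2 = b.1 := (List.isChain_cons_cons.mp hchain).1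
      have hhead' : ((b :: t').head?).map Prod.fst = some a.2 := by simp [hch]
      have := ih (List.isChain_cons_cons.mp hchain).2 hhead' hlast' v
      subst hhead
      have e1 : (a.1 = v) ↔ (v = a.1) := eq_comm
      have e2 : (a.2 = v) ↔ (v = a.2) := eq_comm
      simp only [e1, e2]
      split_ifs at this ⊢ <;> omega

lemma closed_balance {L : List (V × V)} {s : V}
    (hchain : L.Chain' (fun e f => e.2 = f.1))
    (hhead : L.head?.map Prod.fst = some s)
    (hlast : L.getLast?.map Prod.snd = some s) (v : V) :
    Multiset.countP (fun e => e.1 = v) (↑L : Multiset (V × V))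
      = Multiset.countP (fun e => e.2 = v) (↑L : Multiset (V × V)) := by
  have := walk_balance hchain hhead hlast v
  omega

lemma heads_or_last {L : List (V × V)} (hchain : L.Chain' (fun e f => e.2 = f.1)) :
    ∀ e ∈ L, (∃ f ∈ L, f.1 = e.2) ∨ L.getLast?.map Prod.snd = some e.2 := by
  induction L with
  | nil => simp
  | cons a t ih =>
    intro e he
    rcases List.mem_cons.mp he with rfl | he
    · cases t with
      | nil => right; simp
      | cons b t' =>
        exact Or.inl ⟨b, by simp, ((List.isChain_cons_cons.mp hchain).1).symm⟩
    · rcases ih hchain.tail e he with ⟨f, hf, h⟩ | h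
      · exact Or.inl ⟨f, List.mem_cons_of_mem _ hf, h⟩
      · right
        cases t with
        | nil => simp at he
        | cons b t' => rwa [List.getLast?_cons_cons]

lemma heads_are_tails {L : List (V × V)} {s : V}
    (hchain : L.Chain' (fun e f => e.2 = f.1))
    (hhead : L.head?.map Prod.fst = some s)
    (hlast : L.getLast?.map Prod.snd = some s) :
    ∀ e ∈ L, ∃ f ∈ L, f.1 = e.2 := by
  intro e he
  rcases heads_or_last hchain e he with h | h
  · exact h
  · rw [hlast] at h
    cases L with
    | nil => simp at he
    | cons a t =>
      refine ⟨a, by simp, ?_⟩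
      simp only [List.head?_cons, Option.map_some, Option.some.injEq] at hhead
      have hse : s = e.2 := Option.some_injective _ h
      rw [hhead, hse]

lemma trail_extend (E : Multiset (V × V)) (hbal : ∀ v, inDeg E v = outDeg E v) :
    ∀ (n : ℕ) (T : List (V × V)) (s c : V), Multiset.card (E - (↑T : Multiset (V × V))) ≤ n →
      IsDiwalk E s c T → (↑T : Multiset (V × V)) ≤ E →
      ∃ T', IsDiwalk E s s T' ∧ (↑T' : Multiset (V × V)) ≤ E := by
  intro n
  induction n with
  | zero =>
    intro T s c hcard hW hle
    by_cases hcs : c = s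
    · exact ⟨T, hcs ▸ hW, hle⟩
    · exfalso
      obtain ⟨hne, hmem, hchain, hhead, hlast⟩ := hW
      have hwb := walk_balance hchain hhead hlast c
      have hmono : Multiset.countP (fun e => e.2 = c) (↑T : Multiset (V × V))
          ≤ Multiset.countP (fun e => e.2 = c) E := Multiset.countP_le_of_le _ hle
      have hb := hbal c
      unfold inDeg outDeg at hb
      have hwb2 : Multiset.countP (fun e => e.1 = c) (↑T : Multiset (V × V)) + 1
          = Multiset.countP (fun e => e.2 = c) (↑T : Multiset (V × V)) := by
        simpa [hcs] using hwb
      have hEzero : E - (↑T : Multiset (V × V)) = 0 := Multiset.card_eq_zero.mp (Nat.le_zero.mp hcard)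
      have hEle : E ≤ ↑T := tsub_eq_zero_iff_le.mp hEzero
      have : Multiset.countP (fun e => e.1 = c) E
          ≤ Multiset.countP (fun e => e.1 = c) (↑T : Multiset (V × V)) :=
        Multiset.countP_le_of_le _ hEle
      omega
  | succ n ih =>
    intro T s c hcard hW hle
    by_cases hcs : c = s
    · exact ⟨T, hcs ▸ hW, hle⟩
    obtain ⟨hne, hmem, hchain, hhead, hlast⟩ := hW
    have hwb := walk_balance hchain hhead hlast c
    have hwb2 : Multiset.countP (fun e => e.1 = c) (↑T : Multiset (V × V)) + 1
        = Multiset.countP (fun e => e.2 = c) (↑T : Multiset (V × V)) := by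
      simpa [hcs] using hwb
    have hmono : Multiset.countP (fun e => e.2 = c) (↑T : Multiset (V × V))
        ≤ Multiset.countP (fun e => e.2 = c) E := Multiset.countP_le_of_le _ hle
    have hb := hbal c
    unfold inDeg outDeg at hb
    have hpos : 0 < Multiset.countP (fun e => e.1 = c) (E - (↑T : Multiset (V × V))) := by
      rw [Multiset.countP_sub hle]
      omega
    obtain ⟨e, heET, hec⟩ := Multiset.countP_pos.mp hpos
    have heE : e ∈ E := Multiset.mem_of_le (Multiset.sub_le_self _ _) heET
    have hle' : (↑(T ++ [e]) : Multiset (V × V)) ≤ E := by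
      have h1 : ({e} : Multiset (V × V)) ≤ E - (↑T : Multiset (V × V)) := Multiset.singleton_le.mpr heET
      have h2 := (le_tsub_iff_left hle).mp h1
      simpa [← Multiset.coe_add] using h2
    have hW' : IsDiwalk E s e.2 (T ++ [e]) := by
      refine ⟨by simp, ?_, ?_, ?_, ?_⟩
      · intro f hf
        rcases List.mem_append.mp hf with hf | hf
        · exact hmem f hf
        · simp only [List.mem_singleton] at hf; subst hf; exact heE
      · refine List.isChain_append.mpr ?_
        refine ⟨hchain, List.isChain_singleton _, ?_⟩
        intro x hx y hy
        simp only [List.head?_cons, Option.mem_def, Option.some.injEq] at hy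
        subst hy
        have hx2 : x.2 = c := by
          have hx' : T.getLast?.map Prod.snd = some x.2 := by
            rw [Option.mem_def.mp hx]; rfl
          rw [hlast] at hx'
          exact (Option.some_injective _ hx').symm
        rw [hx2, hec]
      · rw [List.head?_append]
        cases hT : T.head? with
        | none => exact absurd (List.head?_eq_none_iff.mp hT) hne
        | some a => rw [hT] at hhead; simpa using hhead
      · rw [List.getLast?_append]
        simp
    have hcard' : Multiset.card (E - (↑(T ++ [e]) : Multiset (V × V))) ≤ n := by
      have heq : E - (↑(T ++ [e]) : Multiset (V × V)) = (E - (↑T : Multiset (V × V))).erase e := by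
        rw [show (↑(T ++ [e]) : Multiset (V × V)) = ↑T + {e} by simp [← Multiset.coe_add],
          tsub_add_eq_tsub_tsub, Multiset.sub_singleton]
      rw [heq]
      have := Multiset.card_erase_lt_of_mem heET
      omega
    exact ih (T ++ [e]) s e.2 hcard' hW' hle'

lemma closed_trail_of_edge (E : Multiset (V × V)) (hbal : ∀ v, inDeg E v = outDeg E v)
    {e : V × V} (he : e ∈ E) :
    ∃ T, IsDiwalk E e.1 e.1 T ∧ (↑T : Multiset (V × V)) ≤ E := by
  have hW : IsDiwalk E e.1 e.2 [e] :=
    ⟨by simp, by simpa using he, List.isChain_singleton _, by simp, by simp⟩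
  have hle : (↑[e] : Multiset (V × V)) ≤ E := by simpa using Multiset.singleton_le.mpr he
  exact trail_extend E hbal (Multiset.card (E - (↑[e] : Multiset (V × V)))) [e] e.1 e.2 le_rfl hW hle

lemma closed_extend (E : Multiset (V × V)) (hbal : ∀ v, inDeg E v = outDeg E v)
    (hsym : ∀ a b : V, E.count (a, b) = E.count (b, a))
    (hconn : UndirConnected E)
    {s : V} {C : List (V × V)} (hW : IsDiwalk E s s C)
    (hle : (↑C : Multiset (V × V)) ≤ E) (hneq : (↑C : Multiset (V × V)) ≠ E) :
    ∃ (s' : V) (C' : List (V × V)), IsDiwalk E s' s' C' ∧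
      (↑C' : Multiset (V × V)) ≤ E ∧ C.length < C'.length := by
  obtain ⟨hCne, hCmem, hCchain, hChead, hClast⟩ := hW
  have hEC : E - (↑C : Multiset (V × V)) ≠ 0 := fun h => hneq (le_antisymm hle (tsub_eq_zero_iff_le.mp h))
  obtain ⟨e₀, he₀⟩ := Multiset.exists_mem_of_ne_zero hEC
  have hheads : ∀ g ∈ C, ∃ f ∈ C, f.1 = g.2 := heads_are_tails hCchain hChead hClast
  have hs_onC : ∃ g ∈ C, g.1 = s := by
    cases C with
    | nil => exact absurd rfl hCne
    | cons a t =>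
      refine ⟨a, by simp, ?_⟩
      simpa using hChead
  have key : ∃ (u : V) (f : V × V), (∃ g ∈ C, g.1 = u) ∧ f ∈ E - (↑C : Multiset (V × V)) ∧ f.1 = u := by
    by_cases h0 : ∃ g ∈ C, g.1 = e₀.1
    · exact ⟨e₀.1, e₀, h0, he₀, rfl⟩
    · have he₀s : e₀.1 ≠ s := fun h => h0 (h ▸ hs_onC)
      have main : ∀ a : V, Relation.ReflTransGen (fun a b => (a, b) ∈ E ∨ (b, a) ∈ E) a s →
          (¬ ∃ g ∈ C, g.1 = a) →
          ∃ (u : V) (f : V × V), (∃ g ∈ C, g.1 = u) ∧ f ∈ E - (↑C : Multiset (V × V)) ∧ f.1 = u := by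
        intro a hrtg
        induction hrtg using Relation.ReflTransGen.head_induction_on with
        | refl => exact fun h => absurd hs_onC h
        | head hrel _ ih =>
          rename_i a c _
          intro h0
          by_cases hc : ∃ g ∈ C, g.1 = c
          · have hca : (c, a) ∈ E := by
              rcases hrel with h | h
              · rw [← Multiset.count_pos] at h ⊢
                rw [hsym]; exact h
              · exact h
            have hnotC : (c, a) ∉ (↑C : Multiset (V × V)) := by
              intro hmem
              rw [Multiset.mem_coe] at hmem
              obtain ⟨f, hf, hf1⟩ := hheads _ hmem
              exact h0 ⟨f, hf, hf1⟩
            have hmem' : (c, a) ∈ E - (↑C : Multiset (V × V)) := by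
              rw [← Multiset.count_pos, Multiset.count_sub]
              have h1 : 0 < E.count (c, a) := Multiset.count_pos.mpr hca
              have h2 : Multiset.count (c, a) (↑C : Multiset (V × V)) = 0 :=
                Multiset.count_eq_zero.mpr hnotC
              omega
            exact ⟨c, (c, a), hc, hmem', rfl⟩
          · exact ih hc
      exact main e₀.1 (hconn e₀.1 s he₀s) h0
  obtain ⟨u, f, ⟨g, hgC, hgu⟩, hfEC, hfu⟩ := key
  obtain ⟨A, B, hAB⟩ := List.append_of_mem hgC
  set C₂ : List (V × V) := (g :: B) ++ A with hC₂def
  have hperm : C₂.Perm C := by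
    rw [hAB]; exact List.perm_append_comm
  have hC₂coe : (↑C₂ : Multiset (V × V)) = ↑C := Quot.sound hperm
  have hCchain' := hCchain
  rw [hAB] at hCchain'
  obtain ⟨hchA, hchgB, hjunc⟩ := List.isChain_append.mp hCchain'
  have hc₂head : C₂.head? = some g := by simp [hC₂def]
  have hW₂ : IsDiwalk E u u C₂ := by
    refine ⟨by simp [hC₂def], fun e he => hCmem e (hperm.mem_iff.mp he), ?_, ?_, ?_⟩
    · refine List.isChain_append.mpr ?_
      refine ⟨hchgB, hchA, ?_⟩
      intro x hx y hy
      have hA_ne : A ≠ [] := by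
        intro h; rw [h] at hy; simp at hy
      have hxC : C.getLast? = some x := by
        rw [hAB, List.getLast?_append, Option.mem_def.mp hx]; rfl
      have hx2 : x.2 = s := by
        rw [hxC] at hClast; simpa using hClast
      have hyC : C.head? = some y := by
        rw [hAB, List.head?_append]
        cases hA : A.head? with
        | none => exact absurd (List.head?_eq_none_iff.mp hA) hA_ne
        | some a' =>
          rw [Option.mem_def.mp hy] at hA
          rw [hA]; rfl
      have hy1 : y.1 = s := by
        rw [hyC] at hChead; simpa using hChead
      rw [hx2, hy1]
    · rw [hc₂head]; simpa using hgu
    · cases hA : A with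
      | nil =>
        have hCeq : C = C₂ := by rw [hAB, hA, hC₂def]; simp [hA]
        have hsu : s = u := by
          rw [hCeq, hc₂head] at hChead
          simp only [Option.map_some, Option.some.injEq] at hChead
          rw [← hChead, hgu]
        rw [← hCeq, hClast, hsu]
      | cons a' A' =>
        have hAne : A ≠ [] := by rw [hA]; simp
        have hlA : A.getLast? = some (A.getLast hAne) := List.getLast?_eq_getLast hAne
        have hjx := hjunc _ (Option.mem_def.mpr hlA) g (by simp)
        have hgl : C₂.getLast? = A.getLast? := by
          rw [hC₂def, List.getLast?_append, hlA]; rfl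
        rw [hgl, hlA]
        simp only [Option.map_some, Option.some.injEq]
        rw [hjx, hgu]
  obtain ⟨hC₂ne, hC₂mem, hC₂chain, hC₂head, hC₂last⟩ := hW₂
  have hle₂ : (↑C₂ : Multiset (V × V)) ≤ E := hC₂coe ▸ hle
  have hbal₂ : ∀ v, inDeg (E - (↑C₂ : Multiset (V × V))) v = outDeg (E - (↑C₂ : Multiset (V × V))) v := by
    intro v
    unfold inDeg outDeg
    rw [Multiset.countP_sub hle₂, Multiset.countP_sub hle₂]
    rw [closed_balance hC₂chain hC₂head hC₂last v]
    have hb := hbal v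
    unfold inDeg outDeg at hb
    rw [hb]
  obtain ⟨D, hWD, hDle⟩ := closed_trail_of_edge (E - (↑C₂ : Multiset (V × V))) hbal₂ (by rw [hC₂coe]; exact hfEC)
  rw [hfu] at hWD
  obtain ⟨hDne, hDmem, hDchain, hDhead, hDlast⟩ := hWD
  refine ⟨u, C₂ ++ D, ⟨?_, ?_, ?_, ?_, ?_⟩, ?_, ?_⟩
  · simp [hC₂def]
  · intro e he
    rcases List.mem_append.mp he with h | h
    · exact hC₂mem e h
    · exact Multiset.mem_of_le (Multiset.sub_le_self _ _) (hDmem e h)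
  · refine List.isChain_append.mpr ?_
    refine ⟨hC₂chain, hDchain, ?_⟩
    intro x hx y hy
    have hx2 : x.2 = u := by
      have : C₂.getLast?.map Prod.snd = some x.2 := by rw [Option.mem_def.mp hx]; rfl
      rw [hC₂last] at this
      exact (Option.some_injective _ this).symm
    have hy1 : y.1 = u := by
      have : D.head?.map Prod.fst = some y.1 := by rw [Option.mem_def.mp hy]; rfl
      rw [hDhead] at this
      exact (Option.some_injective _ this).symm
    rw [hx2, hy1]
  · rw [List.head?_append, hc₂head]
    simpa using hgu
  · rw [List.getLast?_append]
    cases hD : D.getLast? with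
    | none => exact absurd (List.getLast?_eq_none_iff.mp hD) hDne
    | some d => rw [hD] at hDlast; simpa using hDlast
  · have : (↑(C₂ ++ D) : Multiset (V × V)) = ↑C₂ + ↑D := by simp [← Multiset.coe_add]
    rw [this]
    exact (le_tsub_iff_left hle₂).mp hDle
  · have hClen : C.length = C₂.length := by
      rw [hAB, hC₂def]; simp; omega
    have : 0 < D.length := List.length_pos_iff.mpr hDne
    simp only [List.length_append]
    omega

end Helpers

/-- **Proposition 3.** The two-way multidigraph engendered by a finite connected
nontrivial multigraph (i.e. a connected multidigraph with a nonempty symmetric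
edge multiset) is circuit-Eulerian. -/
theorem twoWay_circuitEulerian
    {V : Type*} [Fintype V] [DecidableEq V] (E : Multiset (V × V))
    (hne : E ≠ 0)
    (hsym : ∀ a b : V, E.count (a, b) = E.count (b, a))
    (hconn : UndirConnected E) :
    CircuitEulerian E := by
  have hswap : E.map Prod.swap = E := by
    ext p
    obtain ⟨a, b⟩ := p
    conv_lhs => rw [show ((a, b) : V × V) = Prod.swap (b, a) from rfl,
      Multiset.count_map_eq_count' _ _ Prod.swap_injective]
    exact hsym b a
  have hbal : ∀ v, inDeg E v = outDeg E v := by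
    intro v
    unfold inDeg outDeg
    conv_lhs => rw [← hswap]
    rw [Multiset.countP_map, ← Multiset.countP_eq_card_filter]
    simp only [Prod.snd_swap]
  by_contra hP
  have claim : ∀ n : ℕ, ∃ (s : V) (L : List (V × V)),
      IsDiwalk E s s L ∧ (↑L : Multiset (V × V)) ≤ E ∧ n ≤ L.length := by
    intro n
    induction n with
    | zero =>
      obtain ⟨e, he⟩ := Multiset.exists_mem_of_ne_zero hne
      obtain ⟨T, hW, hle⟩ := closed_trail_of_edge E hbal he
      exact ⟨e.1, T, hW, hle, Nat.zero_le _⟩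
    | succ n ih =>
      obtain ⟨s, L, hW, hle, hlen⟩ := ih
      have hneq : (↑L : Multiset (V × V)) ≠ E := fun h => hP ⟨s, L, hW, h⟩
      obtain ⟨s', L', hW', hle', hlt⟩ := closed_extend E hbal hsym hconn hW hle hneq
      exact ⟨s', L', hW', hle', by omega⟩
  obtain ⟨s, L, hW, hle, hlen⟩ := claim (Multiset.card E + 1)
  have : L.length ≤ Multiset.card E := by
    have := Multiset.card_le_card hle
    rwa [Multiset.coe_card] at this
  omega
end

section
/- Let V be a finite type and let Δ be a finite, nontrivial, strongly connected multidigraph on V given by a multiset E of directed edges. Then the following are equivalent: (1) Δ is path-Eulerian (and hence not circuit-Eulerian); (2) there exist vertices b ≠ e such that τ(b) − η(b) = 1 = η(e) − τ(e), and τ(x) = η(x) for every vertex x ∉ {b, e}. -/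
section
variable {V : Type*} [DecidableEq V]

/-- counting lemma for chained walks -/
lemma walk_count (v : V) : ∀ (L : List (V × V)), L.Chain' (fun e f => e.2 = f.1) →
    ∀ x y : V, L.head?.map Prod.fst = some x → L.getLast?.map Prod.snd = some y →
    L.countP (fun e => e.1 = v) + (if y = v then 1 else 0)
      = L.countP (fun e => e.2 = v) + (if x = v then 1 else 0)
  | [] => by simp
  | [e] => by
    intro _ x y hx hy
    simp only [List.head?, List.getLast?, Option.map_some, Option.some.injEq] at hx hy
    subst hx; subst hy
    simp [List.countP_cons]
    by_cases h1 : e.1 = v <;> by_cases h2 : e.2 = v <;> simp [h1, h2]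
  | e :: f :: t => by
    intro hc x y hx hy
    have hc' : (f :: t).Chain' (fun e f => e.2 = f.1) := hc.tail
    have hef : e.2 = f.1 := (List.isChain_cons_cons.mp hc).1
    have ih := walk_count v (f :: t) hc' f.1 y (by simp) (by
      rwa [List.getLast?_cons_cons] at hy)
    simp only [List.head?, Option.map_some, Option.some.injEq] at hx
    subst hx
    rw [List.countP_cons, List.countP_cons]
    by_cases h1 : e.1 = v <;> by_cases h2 : e.2 = v <;>
      simp [h1, h2, ← hef] at ih ⊢ <;> omega

end

section
variable {V : Type*} [DecidableEq V] [Fintype V]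

lemma outDeg_coe (L : List (V × V)) (v : V) :
    outDeg (↑L) v = L.countP (fun e => e.1 = v) := rfl

lemma inDeg_coe (L : List (V × V)) (v : V) :
    inDeg (↑L) v = L.countP (fun e => e.2 = v) := rfl

lemma deg_split {F E : Multiset (V × V)} (h : F ≤ E) (v : V) :
    outDeg E v = outDeg (E - F) v + outDeg F v ∧
    inDeg E v = inDeg (E - F) v + inDeg F v := by
  simp only [outDeg, inDeg]
  constructor <;>
  · conv_lhs => rw [← tsub_add_cancel_of_le h]
    exact Multiset.countP_add _ _ _

/-- A maximal trail from `w` in a balanced graph closes up. -/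
lemma outDeg_pos {E : Multiset (V × V)} {v : V} : 0 < outDeg E v ↔ ∃ e ∈ E, e.1 = v :=
  Multiset.countP_pos

lemma inDeg_pos {E : Multiset (V × V)} {v : V} : 0 < inDeg E v ↔ ∃ e ∈ E, e.2 = v :=
  Multiset.countP_pos

lemma exists_closed_trail (F : Multiset (V × V))
    (hbal : ∀ v, outDeg F v = inDeg F v) (w : V) (hw : 0 < outDeg F w) :
    ∃ L : List (V × V), L ≠ [] ∧ L.Chain' (fun e f => e.2 = f.1) ∧
      (L : Multiset (V × V)) ≤ F ∧
      L.head?.map Prod.fst = some w ∧ L.getLast?.map Prod.snd = some w := by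
  set S : Set (List (V × V)) :=
    {L | L ≠ [] ∧ L.Chain' (fun e f => e.2 = f.1) ∧ (L : Multiset (V × V)) ≤ F ∧
      L.head?.map Prod.fst = some w} with hS
  have hfin : S.Finite := by
    apply (List.finite_length_le (V × V) (Multiset.card F)).subset
    rintro L ⟨-, -, hle, -⟩
    simpa using Multiset.card_le_card hle
  have hne : S.Nonempty := by
    obtain ⟨e, he, hew⟩ := outDeg_pos.mp hw
    exact ⟨[e], by simp, List.isChain_singleton e, by simpa using he, by simp [hew]⟩
  obtain ⟨L, hLS, hmax'⟩ := Set.Finite.exists_maximalFor List.length S hfin hne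
  have hmax : ∀ j ∈ S, L.length ≤ j.length → j.length ≤ L.length := fun j hj h => hmax' hj h
  obtain ⟨hL0, hch, hle, hhd⟩ := hLS
  refine ⟨L, hL0, hch, hle, hhd, ?_⟩
  set u := (L.getLast hL0).2 with hu
  have hlast : L.getLast?.map Prod.snd = some u := by
    rw [List.getLast?_eq_getLast hL0]; simp [hu]
  by_cases huw : u = w
  · rwa [huw] at hlast
  -- otherwise extend
  exfalso
  have hcount := walk_count u L hch w u hhd hlast
  simp [huw, Ne.symm huw] at hcount
  have h1 := (deg_split hle u).1
  have h2 := (deg_split hle u).2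
  rw [outDeg_coe] at h1
  rw [inDeg_coe] at h2
  have hb := hbal u
  have houtpos : 0 < outDeg (F - (↑L : Multiset (V × V))) u := by
    have : L.countP (fun e => e.2 = u) ≤ inDeg F u := by
      rw [h2]; omega
    omega
  obtain ⟨g, hg, hgu⟩ := outDeg_pos.mp houtpos
  have hnew : (L ++ [g] : List (V × V)) ∈ S := by
    refine ⟨by simp, ?_, ?_, ?_⟩
    · rw [List.Chain', List.isChain_append]
      refine ⟨hch, List.isChain_singleton g, ?_⟩
      intro a ha b hb'
      rw [List.getLast?_eq_getLast hL0, Option.mem_def, Option.some.injEq] at ha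
      simp only [List.head?, Option.mem_def, Option.some.injEq] at hb'
      subst ha; subst hb'; rw [hgu, ← hu]
    · have : (↑(L ++ [g]) : Multiset (V × V)) = ↑L + {g} := rfl
      rw [this]
      calc (↑L : Multiset _) + {g} ≤ ↑L + (F - (↑L : Multiset (V × V))) := by
            exact add_le_add_right (Multiset.singleton_le.mpr hg) _
        _ = F := by rw [add_comm]; exact tsub_add_cancel_of_le hle
    · cases L with
      | nil => exact absurd rfl hL0
      | cons a t => simpa using hhd
  have := hmax _ hnew (by simp)
  simp at this

/-- Rotating a closed chained list. -/
lemma rotate_closed (A B : List (V × V)) (c : V × V) (v : V)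
    (hch : (A ++ c :: B).Chain' (fun e f => e.2 = f.1))
    (h1 : (A ++ c :: B).head?.map Prod.fst = some v)
    (h2 : (A ++ c :: B).getLast?.map Prod.snd = some v) :
    (c :: (B ++ A)).Chain' (fun e f => e.2 = f.1) ∧
    (c :: (B ++ A)).head?.map Prod.fst = some c.1 ∧
    (c :: (B ++ A)).getLast?.map Prod.snd = some c.1 := by
  rcases eq_or_ne A [] with rfl | hA
  · simp only [List.nil_append, List.append_nil] at *
    simp only [List.head?, Option.map_some, Option.some.injEq] at h1
    refine ⟨hch, by simp, by rw [h2, h1]⟩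
  · rw [List.Chain', List.isChain_append] at hch
    obtain ⟨hchA, hchB, hseam⟩ := hch
    have hA1 : (A ++ c :: B).head? = A.head? := List.head?_append_of_ne_nil _ hA
    have hlastA : A.getLast? = some (A.getLast hA) := List.getLast?_eq_getLast hA
    have hseam' : (A.getLast hA).2 = c.1 := by
      apply hseam
      · exact hlastA ▸ rfl
      · simp
    have hA2 : (A ++ c :: B).getLast? = (c :: B).getLast? :=
      List.getLast?_append_of_ne_nil A (by simp)
    rw [hA2] at h2
    rw [hA1] at h1
    have hheadA : A.head? = some (A.head hA) := List.head?_eq_head hA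
    rw [hheadA] at h1
    simp only [Option.map_some, Option.some.injEq] at h1
    constructor
    · show ((c :: B) ++ A).Chain' _
      rw [List.Chain', List.isChain_append]
      refine ⟨hchB, hchA, ?_⟩
      intro x hx y hy
      rw [Option.mem_def] at hx hy
      rw [hx] at h2
      simp only [Option.map_some, Option.some.injEq] at h2
      rw [hheadA] at hy
      simp only [Option.some.injEq] at hy
      rw [h2, ← hy]
      exact h1.symm
    · refine ⟨by simp, ?_⟩
      show ((c :: B) ++ A).getLast?.map Prod.snd = some c.1
      rw [List.getLast?_append_of_ne_nil (c :: B) hA, hlastA]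
      simp [hseam']

/-- A chained walk from outside `S` to inside `S` crosses the boundary. -/
lemma crossing (S : Set V) : ∀ (W : List (V × V)), W.Chain' (fun e f => e.2 = f.1) →
    ∀ x y : V, W.head?.map Prod.fst = some x → W.getLast?.map Prod.snd = some y →
    x ∉ S → y ∈ S → ∃ g ∈ W, g.1 ∉ S ∧ g.2 ∈ S
  | [] => by simp
  | g :: rest => by
    intro hch x y hx hy hxS hyS
    simp only [List.head?, Option.map_some, Option.some.injEq] at hx
    subst hx
    by_cases hgS : g.2 ∈ S
    · exact ⟨g, List.mem_cons_self, hxS, hgS⟩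
    · cases rest with
      | nil =>
        simp only [List.getLast?, Option.map_some, Option.some.injEq] at hy
        exact absurd (hy ▸ hyS) hgS
      | cons f t =>
        have hgf : g.2 = f.1 := (List.isChain_cons_cons.mp hch).1
        obtain ⟨g', hg', h1, h2⟩ := crossing S (f :: t) hch.tail f.1 y (by simp)
          (by rwa [List.getLast?_cons_cons] at hy) (hgf ▸ hgS) hyS
        exact ⟨g', List.mem_cons_of_mem _ hg', h1, h2⟩

/-- **Euler circuit theorem** for balanced strongly connected multidigraphs. -/
lemma euler_circuit (E : Multiset (V × V)) (hne : E ≠ 0)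
    (hbal : ∀ v, outDeg E v = inDeg E v) (hsc : StronglyConnected E) :
    ∃ (v : V) (L : List (V × V)), IsDiwalk E v v L ∧ (L : Multiset (V × V)) = E := by
  set S : Set (List (V × V)) :=
    {L | L ≠ [] ∧ L.Chain' (fun e f => e.2 = f.1) ∧ (L : Multiset (V × V)) ≤ E ∧
      ∃ v, L.head?.map Prod.fst = some v ∧ L.getLast?.map Prod.snd = some v} with hS
  have hfin : S.Finite := by
    apply (List.finite_length_le (V × V) (Multiset.card E)).subset
    rintro L ⟨-, -, hle, -⟩
    simpa using Multiset.card_le_card hle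
  have hSne : S.Nonempty := by
    obtain ⟨f, hf⟩ := Multiset.exists_mem_of_ne_zero hne
    have : 0 < outDeg E f.1 := outDeg_pos.mpr ⟨f, hf, rfl⟩
    obtain ⟨L, h0, hc, hle, hh, hl⟩ := exists_closed_trail E hbal f.1 this
    exact ⟨L, h0, hc, hle, f.1, hh, hl⟩
  obtain ⟨L, hLS, hmax'⟩ := Set.Finite.exists_maximalFor List.length S hfin hSne
  have hmax : ∀ j ∈ S, L.length ≤ j.length → j.length ≤ L.length := fun j hj h => hmax' hj h
  obtain ⟨hL0, hch, hle, v₀, hhd, hlst⟩ := hLS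
  -- the closed trail L is balanced
  have hLbal : ∀ v, L.countP (fun e => e.1 = v) = L.countP (fun e => e.2 = v) := by
    intro v
    have := walk_count v L hch v₀ v₀ hhd hlst
    omega
  have hEmL_bal : ∀ v, outDeg (E - (↑L : Multiset (V × V))) v
      = inDeg (E - (↑L : Multiset (V × V))) v := by
    intro v
    have h1 := (deg_split hle v).1
    have h2 := (deg_split hle v).2
    rw [outDeg_coe] at h1
    rw [inDeg_coe] at h2
    have := hLbal v
    have := hbal v
    omega
  -- suppose L does not exhaust E
  by_cases hLE : (↑L : Multiset (V × V)) = E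
  · exact ⟨v₀, L, ⟨hL0, fun e he => hLE ▸ (by exact_mod_cast he), hch, hhd, hlst⟩, hLE⟩
  exfalso
  have hrem : E - (↑L : Multiset (V × V)) ≠ 0 := by
    intro h
    exact hLE (le_antisymm hle (tsub_eq_zero_iff_le.mp h))
  obtain ⟨f, hf⟩ := Multiset.exists_mem_of_ne_zero hrem
  -- the set of tail vertices of L
  set T : Set V := {u | ∃ g ∈ L, g.1 = u} with hT
  have hheads : ∀ u, (∃ g ∈ L, g.2 = u) → u ∈ T := by
    intro u ⟨g, hg, hgu⟩
    have : 0 < L.countP (fun e => e.2 = u) :=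
      List.countP_pos_iff.mpr ⟨g, hg, by simp [hgu]⟩
    rw [← hLbal u] at this
    obtain ⟨g', hg', hgu'⟩ := List.countP_pos_iff.mp this
    exact ⟨g', hg', by simpa using hgu'⟩
  have hv₀T : v₀ ∈ T := by
    cases L with
    | nil => exact absurd rfl hL0
    | cons a t =>
      simp only [List.head?, Option.map_some, Option.some.injEq] at hhd
      exact ⟨a, List.mem_cons_self, hhd⟩
  -- find w ∈ T with an outgoing edge in E - L
  have key : ∃ w ∈ T, 0 < outDeg (E - (↑L : Multiset (V × V))) w := by
    by_cases hfT : f.1 ∈ T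
    · exact ⟨f.1, hfT, outDeg_pos.mpr ⟨f, hf, rfl⟩⟩
    · have hfv : f.1 ≠ v₀ := fun h => hfT (h ▸ hv₀T)
      obtain ⟨W, hW0, hWE, hWch, hWh, hWl⟩ := (hsc f.1 v₀ hfv).1
      obtain ⟨g, hgW, hg1, hg2⟩ := crossing T W hWch f.1 v₀ hWh hWl hfT hv₀T
      have hgnL : g ∉ L := fun h => hg1 ⟨g, h, rfl⟩
      have hgrem : g ∈ E - (↑L : Multiset (V × V)) := by
        rw [← Multiset.count_pos, Multiset.count_sub]
        have : Multiset.count g (↑L : Multiset (V × V)) = 0 :=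
          Multiset.count_eq_zero.mpr (fun h => hgnL (Multiset.mem_coe.mp h))
        have : 0 < Multiset.count g E := Multiset.count_pos.mpr (hWE g hgW)
        omega
      have : 0 < inDeg (E - (↑L : Multiset (V × V))) g.2 :=
        inDeg_pos.mpr ⟨g, hgrem, rfl⟩
      exact ⟨g.2, hg2, by rw [hEmL_bal]; exact this⟩
  obtain ⟨w, hwT, hwout⟩ := key
  -- closed trail C from w in the remainder
  obtain ⟨C, hC0, hCch, hCle, hCh, hCl⟩ :=
    exists_closed_trail (E - (↑L : Multiset (V × V))) hEmL_bal w hwout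
  -- rotate L to start at w
  obtain ⟨g₀, hg₀L, hg₀w⟩ := hwT
  obtain ⟨A, B, rfl⟩ := List.append_of_mem hg₀L
  obtain ⟨hRch, hRh, hRl⟩ := rotate_closed A B g₀ v₀ hch hhd hlst
  rw [hg₀w] at hRh hRl
  -- splice
  set L₂ : List (V × V) := C ++ (g₀ :: (B ++ A)) with hL₂
  have hL₂S : L₂ ∈ S := by
    refine ⟨by simp [hL₂], ?_, ?_, w, ?_, ?_⟩
    · rw [hL₂, List.Chain', List.isChain_append]
      refine ⟨hCch, hRch, ?_⟩
      intro x hx y hy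
      rw [Option.mem_def] at hx hy
      rw [hx] at hCl
      simp only [Option.map_some, Option.some.injEq] at hCl
      simp only [List.head?, Option.some.injEq] at hy
      subst hy
      rw [hCl, ← hg₀w]
    · have hperm : (↑(g₀ :: (B ++ A)) : Multiset (V × V)) = ↑(A ++ g₀ :: B) := by
        rw [Multiset.coe_eq_coe]
        exact (List.perm_append_comm.cons g₀).trans List.perm_middle.symm
      calc (↑L₂ : Multiset (V × V)) = ↑C + ↑(g₀ :: (B ++ A)) := rfl
        _ = ↑C + ↑(A ++ g₀ :: B) := by rw [hperm]
        _ ≤ (E - ↑(A ++ g₀ :: B)) + ↑(A ++ g₀ :: B) := add_le_add_left hCle _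
        _ = E := tsub_add_cancel_of_le hle
    · rw [hL₂, List.head?_append_of_ne_nil C hC0, ← hCh]
    · rw [hL₂, List.getLast?_append_of_ne_nil C (by simp), ← hRl]
  have hlen := hmax _ hL₂S (by simp [hL₂]; omega)
  rw [hL₂] at hlen
  simp only [List.length_append, List.length_cons] at hlen
  have : C.length = 0 := by omega
  exact hC0 (List.length_eq_zero_iff.mp this)

end

/-- **Corollary 6.** A finite, nontrivial, strongly connected multidigraph is
path-Eulerian if and only if there are vertices `b ≠ e` with
`τ(b) − η(b) = 1 = η(e) − τ(e)` and `τ(x) = η(x)` for every other vertex `x`. -/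
theorem pathEulerian_iff_degree_condition
    {V : Type*} [Fintype V] [DecidableEq V] (E : Multiset (V × V))
    (hne : E ≠ 0) (hsc : StronglyConnected E) :
    PathEulerian E ↔
      ∃ b e : V, b ≠ e ∧
        (outDeg E b : ℤ) - (inDeg E b : ℤ) = 1 ∧
        (inDeg E e : ℤ) - (outDeg E e : ℤ) = 1 ∧
        ∀ x : V, x ≠ b → x ≠ e → outDeg E x = inDeg E x := by
  constructor
  · rintro ⟨x, y, hxy, L, ⟨hL0, hLE, hch, hhd, hlst⟩, hLeq⟩
    have hcnt : ∀ v, L.countP (fun e => e.1 = v) + (if y = v then 1 else 0)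
        = L.countP (fun e => e.2 = v) + (if x = v then 1 else 0) :=
      fun v => walk_count v L hch x y hhd hlst
    have hout : ∀ v, outDeg E v = L.countP (fun e => e.1 = v) := by
      intro v; rw [← hLeq]; rfl
    have hin : ∀ v, inDeg E v = L.countP (fun e => e.2 = v) := by
      intro v; rw [← hLeq]; rfl
    refine ⟨x, y, hxy, ?_, ?_, ?_⟩
    · have := hcnt x
      simp [Ne.symm hxy] at this
      rw [hout, hin, this]
      push_cast; ring
    · have := hcnt y
      simp [hxy] at this
      rw [hout, hin, ← this]
      push_cast; ring
    · intro v hvx hvy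
      have := hcnt v
      simp [Ne.symm hvx, Ne.symm hvy] at this
      rw [hout, hin, this]
  · rintro ⟨b, e, hbe, hb, he, hother⟩
    -- add an auxiliary edge from e to b
    set E' : Multiset (V × V) := (e, b) ::ₘ E with hE'
    have hbal' : ∀ v, outDeg E' v = inDeg E' v := by
      intro v
      have hov : outDeg E' v = outDeg E v + if e = v then 1 else 0 :=
        Multiset.countP_cons _ _ _
      have hiv : inDeg E' v = inDeg E v + if b = v then 1 else 0 :=
        Multiset.countP_cons _ _ _
      rcases eq_or_ne v b with rfl | hvb
      · simp [Ne.symm hbe] at hov hiv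
        omega
      rcases eq_or_ne v e with rfl | hve
      · simp [hbe] at hov hiv
        omega
      · have := hother v hvb hve
        simp [Ne.symm hve, Ne.symm hvb] at hov hiv
        omega
    have hsc' : StronglyConnected E' := by
      intro x y hxy
      obtain ⟨⟨L1, h1⟩, ⟨L2, h2⟩⟩ := hsc x y hxy
      exact ⟨⟨L1, h1.1, fun g hg => Multiset.mem_cons_of_mem (h1.2.1 g hg),
        h1.2.2⟩, ⟨L2, h2.1, fun g hg => Multiset.mem_cons_of_mem (h2.2.1 g hg), h2.2.2⟩⟩
    obtain ⟨v, L', ⟨hL0', hLE', hch', hhd', hlst'⟩, hLeq'⟩ :=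
      euler_circuit E' (Multiset.cons_ne_zero) hbal' hsc'
    have hmem : (e, b) ∈ L' := by
      have : (e, b) ∈ E' := Multiset.mem_cons_self _ _
      rw [← hLeq'] at this
      exact Multiset.mem_coe.mp this
    obtain ⟨A, B, rfl⟩ := List.append_of_mem hmem
    obtain ⟨hRch, hRh, hRl⟩ := rotate_closed A B (e, b) v hch' hhd' hlst'
    set M : List (V × V) := B ++ A with hM
    have hMeq : (↑M : Multiset (V × V)) = E := by
      have hperm : ((e, b) ::ₘ (↑M : Multiset (V × V))) = ↑(A ++ (e, b) :: B) := by
        show ((e, b) :: M : List (V × V)) = (↑(A ++ (e, b) :: B) : Multiset (V × V))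
        rw [Multiset.coe_eq_coe]
        exact (List.perm_append_comm.cons (e, b)).trans List.perm_middle.symm
      have : ((e, b) ::ₘ (↑M : Multiset (V × V))) = (e, b) ::ₘ E := by
        rw [hperm, hLeq']
      exact (Multiset.cons_inj_right _).mp this
    have hM0 : M ≠ [] := by
      intro h
      rw [h] at hMeq
      exact hne (hMeq.symm ▸ rfl)
    refine ⟨b, e, hbe, M, ⟨hM0, ?_, ?_, ?_, ?_⟩, hMeq⟩
    · intro g hg
      rw [← hMeq]
      exact Multiset.mem_coe.mpr hg
    · exact hRch.tail
    · -- head of M has tail b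
      obtain ⟨hlink, -⟩ := List.isChain_cons.mp hRch
      have hh : M.head? = some (M.head hM0) := List.head?_eq_head hM0
      have : (e, b).2 = (M.head hM0).1 := hlink _ (by rw [hh]; rfl)
      rw [hh]
      simp [← this]
    · -- last of M has head e
      have : ((e, b) :: M).getLast? = M.getLast? :=
        List.getLast?_append_of_ne_nil [(e, b)] hM0
      rw [← this]
      exact hRl
end

section
/- Let V be a finite type and let Γ be a connected circuit-Eulerian multidigraph on V with edge multiset E. Let b ≠ e be two vertices of V, let k ≥ 1, and let Π be a list of k pairwise distinct directed edges forming a directed walk from b to e, such that each entry of Π has multiplicity 0 in E. Then the multidigraph on V with edge multiset E + ↑Π (the multiset sum of E and the entries of Π) is path-Eulerian. -/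
/-- **Proposition 10.** Adjoining to a connected circuit-Eulerian multidigraph a
dipath of `k ≥ 1` distinct new diedges from `b` to `e` (with `b ≠ e`) yields a
path-Eulerian multidigraph. -/
theorem circuitEulerian_add_dipath_pathEulerian
    {V : Type*} [Fintype V] [DecidableEq V] (E : Multiset (V × V))
    (hconn : UndirConnected E) (hE : CircuitEulerian E)
    (b e : V) (hbe : b ≠ e) (k : ℕ) (hk : 1 ≤ k)
    (P : List (V × V)) (hlen : P.length = k) (hnodup : P.Nodup)
    (hwalk : IsDiwalk (E + (P : Multiset (V × V))) b e P)
    (hnew : ∀ p ∈ P, E.count p = 0) :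
    PathEulerian (E + (P : Multiset (V × V))) := by
  classical
  obtain ⟨v, L, ⟨hLne, hLmem, hLchain, hLhead, hLlast⟩, hLmult⟩ := hE
  obtain ⟨hPne, hPmem, hPchain, hPhead, hPlast⟩ := hwalk
  -- b is incident to some edge of E
  have hstep : ∃ c : V, (b, c) ∈ E ∨ (c, b) ∈ E := by
    have h := hconn b e hbe
    rcases (Relation.ReflTransGen.cases_head h) with h | ⟨c, hc, _⟩
    · exact absurd h hbe
    · exact ⟨c, hc⟩
  -- there is an edge in L with tail b
  have hmemL : ∀ x : V × V, x ∈ E → x ∈ L := by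
    intro x hx
    rw [← hLmult] at hx
    exact_mod_cast hx
  have htail : ∃ ed ∈ L, ed.1 = b := by
    obtain ⟨c, hc | hc⟩ := hstep
    · exact ⟨(b, c), hmemL _ hc, rfl⟩
    · -- (c,b) ∈ L; find a successor with tail b
      have hcb : (c, b) ∈ L := hmemL _ hc
      obtain ⟨L₁, L₂, hdecomp⟩ := List.append_of_mem hcb
      cases L₂ with
      | nil =>
        -- (c,b) is the last edge, so b = v = tail of the first edge
        have hlast' : L.getLast? = some (c, b) := by
          rw [hdecomp, List.getLast?_append_of_ne_nil _ (by simp)]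
          rfl
        have hbv : b = v := by
          rw [hlast'] at hLlast
          simpa using hLlast
        cases hL : L with
        | nil => exact absurd hL hLne
        | cons a t =>
          refine ⟨a, by simp, ?_⟩
          rw [hL] at hLhead
          simp at hLhead
          rw [hLhead, hbv]
      | cons d L₂' =>
        refine ⟨d, by rw [hdecomp]; simp, ?_⟩
        have := (List.isChain_append.mp (hdecomp ▸ hLchain)).2.1
        rw [List.isChain_cons_cons] at this
        exact this.1.symm
  obtain ⟨ed, hedL, hedb⟩ := htail
  -- rotate L to start at b
  obtain ⟨L₁, L₂, hdecomp⟩ := List.append_of_mem hedL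
  set R : List (V × V) := (ed :: L₂) ++ L₁ with hR
  have hperm : R.Perm L := by
    rw [hdecomp]; exact List.perm_append_comm
  have hRchain : R.Chain' (fun e f => e.2 = f.1) := by
    rw [hdecomp] at hLchain
    obtain ⟨h1, h2, h3⟩ := List.isChain_append.mp hLchain
    refine List.isChain_append.mpr ⟨h2, h1, ?_⟩
    intro x hx y hy
    cases L₁ with
    | nil => simp at hy
    | cons a t =>
      have hx' : L.getLast? = some x := by
        rw [hdecomp, List.getLast?_append_of_ne_nil _ (by simp)]
        exact hx
      have hy' : L.head? = some y := by
        rw [hdecomp]; exact hy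
      rw [hx'] at hLlast; rw [hy'] at hLhead
      simp at hLlast hLhead
      rw [hLlast, hLhead]
  have hRhead : R.head?.map Prod.fst = some b := by
    rw [hR]; simp [hedb]
  have hRlast : R.getLast?.map Prod.snd = some b := by
    cases L₁ with
    | nil =>
      have : R = L := by rw [hR, hdecomp]; simp
      rw [this, hLlast]
      have : L.head? = some ed := by rw [hdecomp]; rfl
      rw [this] at hLhead
      simp at hLhead
      rw [← hLhead, hedb]
    | cons a t =>
      rw [hR, List.getLast?_append_of_ne_nil _ (by simp)]
      rw [hdecomp] at hLchain
      obtain ⟨h1, h2, h3⟩ := List.isChain_append.mp hLchain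
      obtain ⟨x, hx⟩ : ∃ x, (a :: t).getLast? = some x := ⟨_, List.getLast?_eq_getLast (by simp)⟩
      rw [hx]
      have := h3 x (by rw [hx]; rfl) ed rfl
      simp [this, hedb]
  -- the Eulerian dipath is R ++ P
  refine ⟨b, e, hbe, R ++ P, ⟨?_, ?_, ?_, ?_, ?_⟩, ?_⟩
  · simp [hR]
  · intro x hx
    rcases List.mem_append.mp hx with hx | hx
    · have : x ∈ E := by
        rw [← hLmult]
        exact_mod_cast hperm.mem_iff.mp hx
      exact Multiset.mem_add.mpr (Or.inl this)
    · exact hPmem x hx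
  · refine List.isChain_append.mpr ⟨hRchain, hPchain, ?_⟩
    intro x hx y hy
    have h1 : x.2 = b := by
      have hx' : R.getLast? = some x := hx
      rw [hx'] at hRlast
      simpa using hRlast
    have h2 : y.1 = b := by
      have hy' : P.head? = some y := hy
      rw [hy'] at hPhead
      simpa using hPhead
    rw [h1, h2]
  · rw [List.head?_append_of_ne_nil _ (by simp [hR])]
    exact hRhead
  · rw [List.getLast?_append_of_ne_nil _ hPne]
    exact hPlast
  · have : (R : Multiset (V × V)) = E := by
      rw [Multiset.coe_eq_coe.mpr hperm, hLmult]
    rw [← this]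
    exact_mod_cast rfl
end

section
/- Let V be a finite type and let Γ be a finite multidigraph on V given by a multiset E of directed edges, and suppose τ(x) = η(x) for every vertex x ∈ V. Then for every edge (a,b) ∈ E there is a directed walk in Γ from b to a. Consequently, there is no directed edge of Γ whose tailpoint lies in one strongly connected component of Γ and whose headpoint lies in a different strongly connected component. -/
/-- `y` is reachable from `x`: either `x = y` or there is a directed walk from
`x` to `y`. -/
def ReachableIn {V : Type*} (E : Multiset (V × V)) (x y : V) : Prop :=
  x = y ∨ ∃ L, IsDiwalk E x y L

/-- A single edge is a walk from its tail to its head. -/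
lemma diwalk_single {V : Type*} (E : Multiset (V × V)) (e : V × V) (he : e ∈ E) :
    IsDiwalk E e.1 e.2 [e] := by
  refine ⟨by simp, by simpa, List.isChain_singleton e, by simp, by simp⟩

/-- Extending a walk by one more edge. -/
lemma diwalk_snoc {V : Type*} (E : Multiset (V × V)) (x y : V) (f : V × V)
    (L : List (V × V)) (hL : IsDiwalk E x y L) (e : V × V) (hey : e.1 = y)
    (he : e ∈ E) : IsDiwalk E x e.2 (L ++ [e]) := by
  obtain ⟨hne, hmem, hchain, hhead, hlast⟩ := hL
  refine ⟨by simp, ?_, ?_, ?_, ?_⟩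
  · intro f hf
    rcases List.mem_append.1 hf with hf | hf
    · exact hmem f hf
    · simp only [List.mem_singleton] at hf; exact hf ▸ he
  · refine List.isChain_append.2 ?_
    refine ⟨hchain, List.isChain_singleton e, ?_⟩
    intro p hp q hq
    simp only [List.head?_cons, Option.mem_def, Option.some.injEq] at hq
    subst hq
    rw [Option.mem_def] at hp
    rw [hp] at hlast
    simp only [Option.map_some, Option.some.injEq] at hlast
    rw [hey, hlast]
  · rw [List.head?_append]
    cases hL : L.head? with
    | none => exact absurd (List.head?_eq_none_iff.1 hL) hne
    | some p => rw [hL] at hhead; simpa using hhead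
  · simp [List.getLast?_concat]

/-- Summing, over `x ∈ S`, the number of edges whose `f`-coordinate is `x`
counts the edges whose `f`-coordinate lies in `S`. -/
lemma countP_mem_sum {V : Type*} [DecidableEq V] (E : Multiset (V × V))
    (S : Finset V) (f : V × V → V) :
    ∑ x ∈ S, Multiset.countP (fun e => f e = x) E
      = Multiset.countP (fun e => f e ∈ S) E := by
  induction E using Multiset.induction with
  | empty => simp
  | cons e E ih =>
    simp only [Multiset.countP_cons]
    rw [Finset.sum_add_distrib, ih]
    congr 1
    simp [Finset.sum_ite_eq]

/-- If `p → q` holds on a multiset and the counts of `p` and `q` agree, then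
`q → p` holds on the multiset as well. -/
lemma countP_eq_rev {V : Type*} (E : Multiset (V × V))
    (p q : V × V → Prop) [DecidablePred p] [DecidablePred q]
    (hpq : ∀ e ∈ E, p e → q e)
    (hcount : Multiset.countP p E = Multiset.countP q E) :
    ∀ e ∈ E, q e → p e := by
  have hsplit : ∀ (E : Multiset (V × V)), (∀ e ∈ E, p e → q e) →
      Multiset.countP q E
        = Multiset.countP p E + Multiset.countP (fun e => q e ∧ ¬ p e) E := by
    intro E
    induction E using Multiset.induction with
    | empty => simp
    | cons a E ih =>
      intro h
      have ha : p a → q a := h a (Multiset.mem_cons_self a E)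
      have hE : ∀ e ∈ E, p e → q e := fun e he => h e (Multiset.mem_cons_of_mem he)
      have ite1 : (if p a then 1 else 0) + (if q a ∧ ¬ p a then 1 else 0)
          = (if q a then 1 else 0) := by
        by_cases hpa : p a <;> by_cases hqa : q a <;> simp_all
      simp only [Multiset.countP_cons]
      rw [ih hE, ← ite1]
      ring
  have h0 : Multiset.countP (fun e => q e ∧ ¬ p e) E = 0 := by
    have := hsplit E hpq
    omega
  intro e he hq
  by_contra hp
  have hpos : 0 < Multiset.countP (fun e => q e ∧ ¬ p e) E :=
    Multiset.countP_pos.2 ⟨e, he, hq, hp⟩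
  omega

/-- **Claim in Theorem 5.** If out-degree equals in-degree at every vertex of a
finite multidigraph, then for every edge `(a, b)` there is a directed walk back
from `b` to `a`; consequently no directed edge has its tailpoint in one strongly
connected component and its headpoint in a different one (tail and head of every
edge are mutually reachable). -/
theorem balanced_no_edge_between_components
    {V : Type*} [Fintype V] [DecidableEq V] (E : Multiset (V × V))
    (hdeg : ∀ x : V, outDeg E x = inDeg E x) :
    (∀ a b : V, (a, b) ∈ E → ∃ L, IsDiwalk E b a L) ∧
      ∀ a b : V, (a, b) ∈ E → ReachableIn E a b ∧ ReachableIn E b a := by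
  classical
  have key : ∀ a b : V, (a, b) ∈ E → ∃ L, IsDiwalk E b a L := by
    intro a b hab
    by_cases hba : a = b
    · subst hba
      exact ⟨[(a, a)], diwalk_single E (a, a) hab⟩
    · set S : Finset V := Finset.univ.filter (fun x => ReachableIn E b x) with hS
      have hbS : b ∈ S := by
        simp only [hS, Finset.mem_filter, Finset.mem_univ, true_and]; exact Or.inl rfl
      have hclosed : ∀ e ∈ E, e.1 ∈ S → e.2 ∈ S := by
        intro e he h1
        simp only [hS, Finset.mem_filter, Finset.mem_univ, true_and] at h1 ⊢
        rcases h1 with h1 | ⟨L, hL⟩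
        · exact Or.inr ⟨[e], h1 ▸ diwalk_single E e he⟩
        · exact Or.inr ⟨L ++ [e], diwalk_snoc E b e.1 e L hL e (by simp) he⟩
      have hsum : Multiset.countP (fun e => e.1 ∈ S) E
          = Multiset.countP (fun e => e.2 ∈ S) E := by
        rw [← countP_mem_sum E S Prod.fst, ← countP_mem_sum E S Prod.snd]
        exact Finset.sum_congr rfl fun x _ => hdeg x
      have haS : a ∈ S :=
        countP_eq_rev E _ _ hclosed hsum (a, b) hab hbS
      simp only [hS, Finset.mem_filter, Finset.mem_univ, true_and] at haS; unfold ReachableIn at haS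
      rcases haS with h | h
      · exact absurd h.symm hba
      · exact h
  refine ⟨key, fun a b hab => ⟨Or.inr ⟨[(a, b)], diwalk_single E (a, b) hab⟩,
    Or.inr (key a b hab)⟩⟩
end

section
/- Let V be a finite type, let Δ be a multidigraph on V with edge multiset E, let L be a list of elements of V × V whose underlying multiset equals E, and let m = L.length. Let Γ be the multidigraph on the vertex type V ⊕ Fin m whose edge multiset consists of, for each index k : Fin m with L-th entry (a,b), the two edges (Sum.inl a, Sum.inr k) and (Sum.inr k, Sum.inl b), each with multiplicity one (so Γ subdivides every edge of Δ by a new midpoint vertex). Then Δ is circuit-Eulerian if and only if Γ is circuit-Eulerian. -/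
section Helpers

variable {V : Type*}

lemma isDiwalk_singleton {E : Multiset (V × V)} {x y : V} {e : V × V}
    (he : e ∈ E) (h1 : e.1 = x) (h2 : e.2 = y) : IsDiwalk E x y [e] := by
  refine ⟨by simp, by simpa using he, List.isChain_singleton _, by simp [h1], by simp [h2]⟩

lemma IsDiwalk.cons {E : Multiset (V × V)} {z y : V} {M : List (V × V)}
    (h : IsDiwalk E z y M) {e : V × V} (he : e ∈ E) (h2 : e.2 = z) :
    IsDiwalk E e.1 y (e :: M) := by
  obtain ⟨hne, hmem, hch, hhd, hlast⟩ := h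
  obtain ⟨f, M', rfl⟩ := List.exists_cons_of_ne_nil hne
  simp only [List.head?_cons, Option.map_some, Option.some.injEq] at hhd
  refine ⟨by simp, ?_, ?_, by simp, ?_⟩
  · intro a ha; rcases List.mem_cons.1 ha with rfl | ha
    exacts [he, hmem a ha]
  · exact List.isChain_cons_cons.2 ⟨by rw [h2, ← hhd], hch⟩
  · rwa [List.getLast?_cons_cons]

lemma IsDiwalk.of_cons {E : Multiset (V × V)} {x y : V} {e : V × V}
    {M : List (V × V)} (h : IsDiwalk E x y (e :: M)) (hM : M ≠ []) :
    e.1 = x ∧ e ∈ E ∧ IsDiwalk E e.2 y M := by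
  obtain ⟨hne, hmem, hch, hhd, hlast⟩ := h
  obtain ⟨f, M', rfl⟩ := List.exists_cons_of_ne_nil hM
  simp only [List.head?_cons, Option.map_some, Option.some.injEq] at hhd
  rw [List.Chain', List.isChain_cons_cons] at hch
  refine ⟨hhd, hmem e (by simp), by simp, fun a ha => hmem a (by simp [ha]), hch.2,
    by simp [hch.1], ?_⟩
  rwa [List.getLast?_cons_cons] at hlast

lemma IsDiwalk.concat {E : Multiset (V × V)} {x z : V} {M : List (V × V)}
    (h : IsDiwalk E x z M) {e : V × V} (he : e ∈ E) (h1 : e.1 = z) :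
    IsDiwalk E x e.2 (M ++ [e]) := by
  obtain ⟨hne, hmem, hch, hhd, hlast⟩ := h
  refine ⟨by simp, ?_, ?_, ?_, ?_⟩
  · intro a ha; rcases List.mem_append.1 ha with ha | ha
    · exact hmem a ha
    · simp only [List.mem_singleton] at ha; exact ha ▸ he
  · rw [List.Chain', List.isChain_append]
    refine ⟨hch, by simp, ?_⟩
    intro a ha b hb
    simp only [List.head?_cons, Option.mem_def, Option.some.injEq] at hb
    subst hb
    rw [List.getLast?_eq_getLast hne, Option.mem_def, Option.some.injEq] at ha
    have : M.getLast?.map Prod.snd = some a.2 := by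
      rw [List.getLast?_eq_getLast hne, ha]
      rfl
    rw [this] at hlast
    simp only [Option.map_some, Option.some.injEq] at hlast ⊢
    rw [hlast, h1]
  · rwa [List.head?_append_of_ne_nil _ hne]
  · simp

lemma exists_indexList {α : Type*} : ∀ (L W : List α), W.Perm L →
    ∃ K : List (Fin L.length), K.map L.get = W ∧ K.Perm (List.finRange L.length) := by
  intro L
  induction L with
  | nil =>
    intro W h
    exact ⟨[], by simpa using h.eq_nil ▸ rfl, by simp⟩
  | cons b L' ih =>
    intro W h
    have hb : b ∈ W := h.mem_iff.mpr List.mem_cons_self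
    obtain ⟨W₁, W₂, rfl⟩ := List.append_of_mem hb
    have h' : (W₁ ++ W₂).Perm L' := (List.perm_middle.symm.trans h).cons_inv
    obtain ⟨K', hmap, hperm⟩ := ih (W₁ ++ W₂) h'
    refine ⟨(K'.take W₁.length).map Fin.succ ++ (0 : Fin (L'.length + 1)) ::
      (K'.drop W₁.length).map Fin.succ, ?_, ?_⟩
    · have hsucc : ∀ j : Fin L'.length, (b :: L').get (Fin.succ j) = L'.get j := by
        intro j; simp [List.get_eq_getElem, Fin.succ]
      have htake : ((K'.take W₁.length).map Fin.succ).map (b :: L').get = W₁ := by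
        rw [List.map_map]
        have : (K'.take W₁.length).map ((b :: L').get ∘ Fin.succ)
            = (K'.take W₁.length).map L'.get := List.map_congr_left fun j _ => hsucc j
        rw [this, List.map_take, hmap, List.take_left]
      have hdrop : ((K'.drop W₁.length).map Fin.succ).map (b :: L').get = W₂ := by
        rw [List.map_map]
        have : (K'.drop W₁.length).map ((b :: L').get ∘ Fin.succ)
            = (K'.drop W₁.length).map L'.get := List.map_congr_left fun j _ => hsucc j
        rw [this, List.map_drop, hmap, List.drop_left]
      simp only [List.map_append, List.map_cons, htake, hdrop]
      rfl
    · refine List.perm_middle.trans ?_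
      simp only [List.length_cons]
      rw [List.finRange_succ]
      refine List.Perm.cons _ ?_
      rw [← List.map_append, List.take_append_drop]
      exact hperm.map Fin.succ

/-- The list of edges of the subdivision graph. -/
def subEdges (L : List (V × V)) : List ((V ⊕ Fin L.length) × (V ⊕ Fin L.length)) :=
  (List.finRange L.length).flatMap fun k : Fin L.length =>
    [(Sum.inl (L.get k).1, Sum.inr k), (Sum.inr k, Sum.inl (L.get k).2)]

lemma mem_subEdges {L : List (V × V)} {e : (V ⊕ Fin L.length) × (V ⊕ Fin L.length)} :
    e ∈ subEdges L ↔ ∃ k : Fin L.length,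
      e = (Sum.inl (L.get k).1, Sum.inr k) ∨ e = (Sum.inr k, Sum.inl (L.get k).2) := by
  simp [subEdges, List.mem_flatMap, or_comm]

/-- Building a diwalk in the subdivision from a diwalk presented by an index list. -/
lemma build_subdivision {L : List (V × V)} {E : Multiset (V × V)} :
    ∀ (K : List (Fin L.length)) (x y : V), IsDiwalk E x y (K.map L.get) →
      IsDiwalk (↑(subEdges L)) (Sum.inl x) (Sum.inl y)
        (K.flatMap fun k => [(Sum.inl (L.get k).1, Sum.inr k), (Sum.inr k, Sum.inl (L.get k).2)])
  | [], x, y, h => absurd rfl h.1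
  | [k], x, y, h => by
    obtain ⟨-, -, -, hhd, hlast⟩ := h
    simp only [List.map_cons, List.map_nil, List.head?_cons, List.getLast?_singleton,
      Option.map_some, Option.some.injEq] at hhd hlast
    have hA : (Sum.inl (L.get k).1, Sum.inr k) ∈ subEdges L :=
      mem_subEdges.2 ⟨k, Or.inl rfl⟩
    have hB : ((Sum.inr k : V ⊕ Fin L.length), Sum.inl (L.get k).2) ∈ subEdges L :=
      mem_subEdges.2 ⟨k, Or.inr rfl⟩
    subst hhd hlast
    have h1 : IsDiwalk (↑(subEdges L)) (Sum.inr k) (Sum.inl (L.get k).2)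
        [((Sum.inr k : V ⊕ Fin L.length), Sum.inl (L.get k).2)] :=
      isDiwalk_singleton (by exact_mod_cast hB) rfl rfl
    simpa using h1.cons (e := (Sum.inl (L.get k).1, Sum.inr k))
      (by exact_mod_cast hA) rfl
  | k :: k' :: K, x, y, h => by
    have hne : ((k' :: K).map L.get) ≠ [] := by simp
    obtain ⟨hhd, -, htail⟩ := h.of_cons (by simpa using hne)
    subst hhd
    have ih := build_subdivision (k' :: K) (L.get k).2 y htail
    have hA : (Sum.inl (L.get k).1, Sum.inr k) ∈ subEdges L :=
      mem_subEdges.2 ⟨k, Or.inl rfl⟩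
    have hB : ((Sum.inr k : V ⊕ Fin L.length), Sum.inl (L.get k).2) ∈ subEdges L :=
      mem_subEdges.2 ⟨k, Or.inr rfl⟩
    have h1 := ih.cons (e := ((Sum.inr k : V ⊕ Fin L.length), Sum.inl (L.get k).2))
      (by exact_mod_cast hB) rfl
    have h2 := h1.cons (e := (Sum.inl (L.get k).1, Sum.inr k)) (by exact_mod_cast hA) rfl
    simpa using h2

/-- The projection sending a subdivision edge with midpoint head to the original edge. -/
def projEdge (L : List (V × V)) (e : (V ⊕ Fin L.length) × (V ⊕ Fin L.length)) :
    Option (V × V) :=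
  match e.2 with
  | Sum.inr k => some (L.get k)
  | Sum.inl _ => none

lemma projEdge_flatMap (L : List (V × V)) (ks : List (Fin L.length)) :
    (ks.flatMap fun k => [(Sum.inl (L.get k).1, Sum.inr k),
      (Sum.inr k, Sum.inl (L.get k).2)]).filterMap (projEdge L) = ks.map L.get := by
  induction ks with
  | nil => rfl
  | cons k ks ih =>
    rw [List.flatMap_cons, List.filterMap_append, ih, List.map_cons]
    rfl

lemma projEdge_subEdges (L : List (V × V)) : (subEdges L).filterMap (projEdge L) = L := by
  rw [subEdges, projEdge_flatMap, List.map_get_finRange]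

/-- Extracting a diwalk in the original graph from a diwalk in the subdivision. -/
lemma extract_subdivision {L : List (V × V)} :
    ∀ (C : List ((V ⊕ Fin L.length) × (V ⊕ Fin L.length))) (x y : V),
      IsDiwalk (↑(subEdges L)) (Sum.inl x) (Sum.inl y) C →
      IsDiwalk (↑L) x y (C.filterMap (projEdge L))
  | [], x, y, h => absurd rfl h.1
  | [e], x, y, h => by
    obtain ⟨-, hmem, -, hhd, hlast⟩ := h
    simp only [List.head?_cons, List.getLast?_singleton, Option.map_some,
      Option.some.injEq] at hhd hlast
    have he : e ∈ subEdges L := by exact_mod_cast hmem e (by simp)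
    rcases mem_subEdges.1 he with ⟨k, rfl | rfl⟩
    · exact absurd hlast (by simp)
    · exact absurd hhd (by simp)
  | e₁ :: e₂ :: C, x, y, h => by
    obtain ⟨h1, he₁, rest⟩ := h.of_cons (by simp)
    have he₁' : e₁ ∈ subEdges L := by exact_mod_cast he₁
    rcases mem_subEdges.1 he₁' with ⟨k, rfl | rfl⟩
    swap
    · exact absurd h1 (by simp)
    simp only at h1 rest
    obtain rfl : (L.get k).1 = x := by injection h1
    rcases eq_or_ne C [] with rfl | hC
    · obtain ⟨-, hmem2, -, hhd2, hlast2⟩ := rest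
      simp only [List.head?_cons, List.getLast?_singleton, Option.map_some,
        Option.some.injEq] at hhd2 hlast2
      have he₂ : e₂ ∈ subEdges L := by exact_mod_cast hmem2 e₂ (by simp)
      rcases mem_subEdges.1 he₂ with ⟨k', rfl | rfl⟩
      · exact absurd hhd2 (by simp)
      obtain rfl : k = k' := ((by simpa using hhd2 : k' = k)).symm
      obtain rfl : (L.get k).2 = y := by simpa using hlast2
      have : ([(Sum.inl (L.get k).1, Sum.inr k),
          ((Sum.inr k : V ⊕ Fin L.length), Sum.inl (L.get k).2)]).filterMap (projEdge L)
          = [L.get k] := by simp [projEdge]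
      rw [this]
      exact isDiwalk_singleton (by simp [List.get_mem]) rfl rfl
    · obtain ⟨h2, he₂, rest2⟩ := rest.of_cons hC
      have he₂' : e₂ ∈ subEdges L := by exact_mod_cast he₂
      rcases mem_subEdges.1 he₂' with ⟨k', rfl | rfl⟩
      · exact absurd h2 (by simp)
      obtain rfl : k = k' := ((by simpa using h2 : k' = k)).symm
      simp only at rest2
      have ih := extract_subdivision C (L.get k).2 y rest2
      have hcons := ih.cons (e := L.get k) (by simp [List.get_mem]) rfl
      have hfm : ((Sum.inl (L.get k).1, (Sum.inr k : V ⊕ Fin L.length)) ::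
          ((Sum.inr k : V ⊕ Fin L.length), Sum.inl (L.get k).2) :: C).filterMap (projEdge L)
          = L.get k :: C.filterMap (projEdge L) := by simp [projEdge]; rfl
      rw [hfm]
      exact hcons

end Helpers

/-- **Clark's gambit.** Subdividing every edge of a multidigraph `Δ` by a new
midpoint vertex produces a multidigraph `Γ` that is circuit-Eulerian if and only
if `Δ` is. -/
theorem circuitEulerian_iff_subdivision
    {V : Type*} [Fintype V] [DecidableEq V] (E : Multiset (V × V))
    (L : List (V × V)) (hL : (L : Multiset (V × V)) = E) :
    CircuitEulerian E ↔
      CircuitEulerian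
        (((List.finRange L.length).flatMap fun k : Fin L.length =>
            [(Sum.inl (L.get k).1, Sum.inr k), (Sum.inr k, Sum.inl (L.get k).2)] :
          List ((V ⊕ Fin L.length) × (V ⊕ Fin L.length))) :
          Multiset ((V ⊕ Fin L.length) × (V ⊕ Fin L.length))) := by
  rw [show ((List.finRange L.length).flatMap fun k : Fin L.length =>
      [(Sum.inl (L.get k).1, Sum.inr k), (Sum.inr k, Sum.inl (L.get k).2)]) = subEdges L
      from rfl]
  constructor
  · rintro ⟨v, W, hW, hWE⟩
    have hperm : W.Perm L := Multiset.coe_eq_coe.mp (hWE.trans hL.symm)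
    obtain ⟨K, hmap, hKperm⟩ := exists_indexList L W hperm
    refine ⟨Sum.inl v, K.flatMap fun k =>
      [(Sum.inl (L.get k).1, Sum.inr k), (Sum.inr k, Sum.inl (L.get k).2)], ?_, ?_⟩
    · exact build_subdivision K v v (hmap ▸ hW)
    · calc ((K.flatMap fun k => [(Sum.inl (L.get k).1, Sum.inr k),
              (Sum.inr k, Sum.inl (L.get k).2)] :
            List ((V ⊕ Fin L.length) × (V ⊕ Fin L.length))) :
            Multiset ((V ⊕ Fin L.length) × (V ⊕ Fin L.length)))
          = (K : Multiset (Fin L.length)).bind (fun k =>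
              ↑[(Sum.inl (L.get k).1, Sum.inr k), (Sum.inr k, Sum.inl (L.get k).2)]) :=
            (Multiset.coe_bind _ _).symm
        _ = ((List.finRange L.length : Multiset (Fin L.length))).bind (fun k =>
              ↑[(Sum.inl (L.get k).1, Sum.inr k), (Sum.inr k, Sum.inl (L.get k).2)]) := by
            rw [Multiset.coe_eq_coe.mpr hKperm]
        _ = _ := Multiset.coe_bind _ _
  · rintro ⟨w, C, hC, hCE⟩
    have main : ∀ (b : V) (D : List ((V ⊕ Fin L.length) × (V ⊕ Fin L.length))),
        IsDiwalk (↑(subEdges L)) (Sum.inl b) (Sum.inl b) D →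
        (D : Multiset ((V ⊕ Fin L.length) × (V ⊕ Fin L.length))) = ↑(subEdges L) →
        CircuitEulerian E := by
      intro b D hD hDE
      refine ⟨b, D.filterMap (projEdge L), hL ▸ extract_subdivision D b b hD, ?_⟩
      have hp : D.Perm (subEdges L) := Multiset.coe_eq_coe.mp hDE
      have hproj : (D.filterMap (projEdge L)).Perm L := by
        have := hp.filterMap (projEdge L)
        rwa [projEdge_subEdges] at this
      rw [← hL]
      exact Multiset.coe_eq_coe.mpr hproj
    cases w with
    | inl v => exact main v C hC hCE
    | inr k =>
      obtain ⟨e, C', rfl⟩ := List.exists_cons_of_ne_nil hC.1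
      have he : e ∈ subEdges L := by exact_mod_cast hC.2.1 e (by simp)
      have h1 : e.1 = Sum.inr k := by
        have := hC.2.2.2.1
        simpa using this
      rcases mem_subEdges.1 he with ⟨k', rfl | rfl⟩
      · exact absurd h1 (by simp)
      obtain rfl : k = k' := ((by simpa using h1 : k' = k)).symm
      have hC' : C' ≠ [] := by
        rintro rfl
        have := hC.2.2.2.2
        simp at this
      obtain ⟨-, he', rest⟩ := hC.of_cons hC'
      simp only at rest
      have hD := rest.concat (e := ((Sum.inr k : V ⊕ Fin L.length), Sum.inl (L.get k).2))
        he' rfl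
      refine main (L.get k).2 (C' ++ [((Sum.inr k : V ⊕ Fin L.length), Sum.inl (L.get k).2)])
        hD ?_
      refine Eq.trans ?_ hCE
      exact Multiset.coe_eq_coe.mpr (List.perm_append_singleton _ _)
end
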